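/- arXiv:1212.5793 — 4 statements merged into one kernel-verified Lean document; each statement's English description precedes it below -/
import Mathlib

section
/- Let u : (0, r₀] → [0, ∞) be measurable with ∫₀^{r₀} u(r) dr < ∞, and let g be a C¹ function on the punctured disc D*(0, r₀) ⊂ ℂ such that |∇g(a)| ≤ u(|a|) for all a ∈ D*(0, r₀). Then g(a) has a (finite) limit as a → 0. -/
open MeasureTheory Set Filter Topology



lemma isOpen_punct (r₀ : ℝ) :
    IsOpen {a : ℂ | 0 < ‖a‖ ∧ ‖a‖ < r₀} := by
  have : {a : ℂ | 0 < ‖a‖ ∧ ‖a‖ < r₀} = (fun a : ℂ => ‖a‖) ⁻¹' (Ioo 0 r₀) := rfl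
  rw [this]
  exact isOpen_Ioo.preimage continuous_norm

lemma path_est {g : ℂ → ℂ} {s : Set ℂ} (hso : IsOpen s)
    (hg : ContDiffOn ℝ 1 g s)
    (γ γ' : ℝ → ℂ) {α β : ℝ} (hαβ : α ≤ β)
    (hγ : ∀ t ∈ Icc α β, HasDerivAt γ (γ' t) t)
    (hγc : ContinuousOn γ' (Icc α β))
    (hmem : ∀ t ∈ Icc α β, γ t ∈ s)
    (b : ℝ → ℝ)
    (hb : ∀ t ∈ Icc α β, ‖fderiv ℝ g (γ t)‖ * ‖γ' t‖ ≤ b t)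
    (hbi : IntervalIntegrable b MeasureTheory.volume α β) :
    ‖g (γ β) - g (γ α)‖ ≤ |∫ t in α..β, b t| := by
  have hderivg : ∀ a ∈ s, HasFDerivAt g (fderiv ℝ g a) a := fun a ha =>
    (((hg.differentiableOn one_ne_zero) a ha).differentiableAt (hso.mem_nhds ha)).hasFDerivAt
  set F' : ℝ → ℂ := fun t => fderiv ℝ g (γ t) (γ' t) with hF'
  have hF : ∀ t ∈ Icc α β, HasDerivAt (fun t => g (γ t)) (F' t) t := fun t ht =>
    (hderivg (γ t) (hmem t ht)).comp_hasDerivAt t (hγ t ht)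
  have hγcont : ContinuousOn γ (Icc α β) := fun t ht =>
    ((hγ t ht).continuousAt).continuousWithinAt
  have hfc : ContinuousOn (fderiv ℝ g) s := hg.continuousOn_fderiv_of_isOpen hso le_rfl
  have hF'c : ContinuousOn F' (Icc α β) :=
    ContinuousOn.clm_apply (hfc.comp hγcont hmem) hγc
  have hF'i : IntervalIntegrable F' MeasureTheory.volume α β := by
    apply ContinuousOn.intervalIntegrable
    rwa [uIcc_of_le hαβ]
  have heq : ∫ t in α..β, F' t = g (γ β) - g (γ α) := by
    apply intervalIntegral.integral_eq_sub_of_hasDerivAt _ hF'i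
    intro t ht
    exact hF t (by rwa [uIcc_of_le hαβ] at ht)
  rw [← heq]
  apply intervalIntegral.norm_integral_le_abs_of_norm_le _ hbi
  filter_upwards [ae_restrict_mem measurableSet_uIoc] with t ht
  have ht' : t ∈ Icc α β := by
    rw [uIoc_of_le hαβ] at ht
    exact Ioc_subset_Icc_self ht
  calc ‖F' t‖ ≤ ‖fderiv ℝ g (γ t)‖ * ‖γ' t‖ := (fderiv ℝ g (γ t)).le_opNorm _
    _ ≤ b t := hb t ht'

lemma radial_est {r₀ : ℝ} {u : ℝ → ℝ} {g : ℂ → ℂ}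
    (hu_nonneg : ∀ r ∈ Ioc (0:ℝ) r₀, 0 ≤ u r)
    (hu_int : IntegrableOn u (Ioc 0 r₀))
    (hg_C1 : ContDiffOn ℝ 1 g {a : ℂ | 0 < ‖a‖ ∧ ‖a‖ < r₀})
    (hg_deriv : ∀ a ∈ {a : ℂ | 0 < ‖a‖ ∧ ‖a‖ < r₀},
      ‖fderiv ℝ g a‖ ≤ u (‖a‖))
    (θ r₁ r₂ : ℝ) (h1 : 0 < r₁) (h12 : r₁ ≤ r₂) (h2 : r₂ < r₀) :
    ‖g (r₂ * Complex.exp (θ * Complex.I)) - g (r₁ * Complex.exp (θ * Complex.I))‖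
      ≤ ∫ t in Ioc r₁ r₂, u t := by
  set e : ℂ := Complex.exp (θ * Complex.I) with he
  have habs_e : ‖e‖ = 1 := Complex.norm_exp_ofReal_mul_I θ
  have hmemIoc : Ioc r₁ r₂ ⊆ Ioc 0 r₀ := Ioc_subset_Ioc h1.le h2.le
  have habs : ∀ t ∈ Icc r₁ r₂, ‖((t:ℂ) * e)‖ = t := by
    intro t ht
    rw [norm_mul, Complex.norm_real, Real.norm_eq_abs, habs_e, mul_one, abs_of_pos (lt_of_lt_of_le h1 ht.1)]
  have hmem : ∀ t ∈ Icc r₁ r₂, ((t:ℂ) * e) ∈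
      {a : ℂ | 0 < ‖a‖ ∧ ‖a‖ < r₀} := by
    intro t ht
    rw [Set.mem_setOf_eq, habs t ht]
    exact ⟨lt_of_lt_of_le h1 ht.1, lt_of_le_of_lt ht.2 h2⟩
  have hγ : ∀ t ∈ Icc r₁ r₂, HasDerivAt (fun t : ℝ => (t:ℂ) * e) e t := by
    intro t _
    have h0 : HasDerivAt (fun x : ℝ => ((x:ℝ) : ℂ)) ((1:ℝ):ℂ) t :=
      HasDerivAt.ofReal_comp (hasDerivAt_id t)
    simpa using h0.mul_const e
  have hbi : IntervalIntegrable u MeasureTheory.volume r₁ r₂ := by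
    rw [intervalIntegrable_iff, uIoc_of_le h12]
    exact hu_int.mono_set hmemIoc
  have key := path_est (isOpen_punct r₀) hg_C1 (fun t : ℝ => (t:ℂ) * e) (fun _ => e) h12
    hγ continuousOn_const hmem u ?_ hbi
  · have hnn : 0 ≤ ∫ t in Ioc r₁ r₂, u t :=
      setIntegral_nonneg measurableSet_Ioc (fun t ht => hu_nonneg t (hmemIoc ht))
    rwa [intervalIntegral.integral_of_le h12, _root_.abs_of_nonneg hnn] at key
  · intro t ht
    have := hg_deriv _ (hmem t ht)
    rw [habs t ht] at this
    calc ‖fderiv ℝ g ((t:ℂ) * e)‖ * ‖e‖ = ‖fderiv ℝ g ((t:ℂ) * e)‖ := by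
          rw [habs_e, mul_one]
      _ ≤ u t := this

lemma arc_est {r₀ : ℝ} {u : ℝ → ℝ} {g : ℂ → ℂ}
    (hu_nonneg : ∀ r ∈ Ioc (0:ℝ) r₀, 0 ≤ u r)
    (hg_C1 : ContDiffOn ℝ 1 g {a : ℂ | 0 < ‖a‖ ∧ ‖a‖ < r₀})
    (hg_deriv : ∀ a ∈ {a : ℂ | 0 < ‖a‖ ∧ ‖a‖ < r₀},
      ‖fderiv ℝ g a‖ ≤ u (‖a‖))
    (ρ α β : ℝ) (hρ : 0 < ρ) (hρ' : ρ < r₀) (hαβ : α ≤ β) :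
    ‖g (ρ * Complex.exp (β * Complex.I)) - g (ρ * Complex.exp (α * Complex.I))‖
      ≤ u ρ * ρ * (β - α) := by
  set γ : ℝ → ℂ := fun t => (ρ:ℂ) * Complex.exp ((t:ℝ) * Complex.I) with hγdef
  set γ' : ℝ → ℂ := fun t => (ρ:ℂ) * (Complex.exp ((t:ℝ) * Complex.I) * (1 * Complex.I)) with hγ'def
  have habs : ∀ t : ℝ, ‖γ t‖ = ρ := by
    intro t
    simp [hγdef, norm_mul, Complex.norm_real, Complex.norm_exp_ofReal_mul_I, abs_of_pos hρ]
  have hmem : ∀ t ∈ Icc α β, γ t ∈ {a : ℂ | 0 < ‖a‖ ∧ ‖a‖ < r₀} := by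
    intro t _
    rw [Set.mem_setOf_eq, habs t]
    exact ⟨hρ, hρ'⟩
  have hγ : ∀ t ∈ Icc α β, HasDerivAt γ (γ' t) t := by
    intro t _
    have h0 : HasDerivAt (fun x : ℝ => ((x:ℝ):ℂ) * Complex.I) (((1:ℝ):ℂ) * Complex.I) t :=
      (HasDerivAt.ofReal_comp (hasDerivAt_id t)).mul_const Complex.I
    exact (h0.cexp).const_mul (ρ:ℂ)
  have hγ'norm : ∀ t : ℝ, ‖γ' t‖ = ρ := by
    intro t
    simp [hγ'def, norm_mul, Complex.norm_real,
      Complex.norm_exp_ofReal_mul_I, abs_of_pos hρ]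
  have hγc : ContinuousOn γ' (Icc α β) := by
    apply Continuous.continuousOn
    fun_prop
  have huρ : 0 ≤ u ρ := hu_nonneg ρ ⟨hρ, hρ'.le⟩
  have key := path_est (isOpen_punct r₀) hg_C1 γ γ' hαβ hγ hγc hmem
    (fun _ => u ρ * ρ) ?_ intervalIntegrable_const
  · have hβα : (0:ℝ) ≤ β - α := sub_nonneg.2 hαβ
    rw [intervalIntegral.integral_const, smul_eq_mul,
      _root_.abs_of_nonneg (mul_nonneg hβα (mul_nonneg huρ hρ.le)), mul_comm (β - α)] at key
    exact key
  · intro t ht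
    rw [hγ'norm t]
    have := hg_deriv _ (hmem t ht)
    rw [habs t] at this
    exact mul_le_mul_of_nonneg_right this hρ.le


lemma small_int {r₀ : ℝ} (hr₀ : 0 < r₀) {u : ℝ → ℝ}
    (hu_int : IntegrableOn u (Ioc 0 r₀)) {ε : ℝ} (hε : 0 < ε) :
    ∃ δ, 0 < δ ∧ δ < r₀ ∧ ∫ t in Ioc 0 δ, u t < ε := by
  have hs : Tendsto (fun δ : ℝ => (volume.restrict (Ioc 0 r₀)) (Ioc 0 δ)) (𝓝[>] (0:ℝ)) (𝓝 0) := by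
    have h1 : ∀ δ : ℝ, (volume.restrict (Ioc 0 r₀)) (Ioc 0 δ) ≤ ENNReal.ofReal δ := by
      intro δ
      calc (volume.restrict (Ioc 0 r₀)) (Ioc 0 δ) ≤ volume (Ioc 0 δ) :=
            Measure.restrict_le_self _
        _ = ENNReal.ofReal (δ - 0) := Real.volume_Ioc
        _ = ENNReal.ofReal δ := by rw [sub_zero]
    have h2 : Tendsto (fun δ : ℝ => ENNReal.ofReal δ) (𝓝[>] (0:ℝ)) (𝓝 0) := by
      have h3 : Tendsto (fun δ : ℝ => δ) (𝓝[>] (0:ℝ)) (𝓝 0) :=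
        tendsto_id.mono_left nhdsWithin_le_nhds
      simpa [Function.comp_def] using (ENNReal.continuous_ofReal.tendsto 0).comp h3
    exact tendsto_of_tendsto_of_tendsto_of_le_of_le tendsto_const_nhds h2
      (fun δ => zero_le) h1
  have h := hu_int.tendsto_setIntegral_nhds_zero (l := 𝓝[>] (0:ℝ))
    (s := fun δ : ℝ => Ioc 0 δ) hs
  have hev : ∀ᶠ δ in 𝓝[>] (0:ℝ),
      (∫ x in Ioc 0 δ, u x ∂(volume.restrict (Ioc 0 r₀))) < ε ∧ 0 < δ ∧ δ < r₀ := by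
    filter_upwards [h.eventually (eventually_lt_nhds hε) , self_mem_nhdsWithin,
      eventually_nhdsWithin_of_eventually_nhds (eventually_lt_nhds hr₀)] with δ h1 h2 h3
    exact ⟨h1, h2, h3⟩
  obtain ⟨δ, h1, h2, h3⟩ := hev.exists
  refine ⟨δ, h2, h3, ?_⟩
  rwa [Measure.restrict_restrict measurableSet_Ioc,
    inter_eq_left.2 (Ioc_subset_Ioc le_rfl h3.le)] at h1

lemma good_rho {d c η : ℝ} {u : ℝ → ℝ} (hc : 0 < c) (h2c : 2*c ≤ d)
    (hu_nonneg : ∀ r ∈ Ioc (0:ℝ) d, 0 ≤ u r)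
    (hu_int : IntegrableOn u (Ioc 0 d)) (hη : 0 < η) :
    ∃ ρ ∈ Ioc c (2*c), u ρ ≤ (∫ t in Ioc 0 d, u t)/c + η := by
  set A := ∫ t in Ioc 0 d, u t with hA
  by_contra hcon
  push_neg at hcon
  have hsub : Ioc c (2*c) ⊆ Ioc 0 d := Ioc_subset_Ioc hc.le h2c
  have hint2 : IntegrableOn u (Ioc c (2*c)) := hu_int.mono_set hsub
  have hvol : (volume (Ioc c (2*c))).toReal = c := by
    rw [Real.volume_Ioc, ENNReal.toReal_ofReal (by linarith)]; ring
  have hkey := setIntegral_ge_of_const_le (c := A/c + η) measurableSet_Ioc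
    (by rw [Real.volume_Ioc]; exact ENNReal.ofReal_ne_top)
    (fun x hx => (hcon x hx).le) hint2
  rw [measureReal_def, hvol, smul_eq_mul] at hkey
  have hmono : (∫ t in Ioc c (2*c), u t) ≤ A := by
    apply setIntegral_mono_set hu_int
    · exact (ae_restrict_iff' measurableSet_Ioc).2 (ae_of_all _ hu_nonneg)
    · exact HasSubset.Subset.eventuallyLE hsub
  have hAc : (A/c) * c = A := div_mul_cancel₀ A hc.ne'
  nlinarith


theorem stmt1 (r₀ : ℝ) (hr₀ : 0 < r₀) (u : ℝ → ℝ)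
    (hu_meas : Measurable u) (hu_nonneg : ∀ r ∈ Ioc (0:ℝ) r₀, 0 ≤ u r)
    (hu_int : IntegrableOn u (Ioc 0 r₀))
    (g : ℂ → ℂ)
    (hg_C1 : ContDiffOn ℝ 1 g {a : ℂ | 0 < ‖a‖ ∧ ‖a‖ < r₀})
    (hg_deriv : ∀ a ∈ {a : ℂ | 0 < ‖a‖ ∧ ‖a‖ < r₀},
      ‖fderiv ℝ g a‖ ≤ u (‖a‖)) :
    ∃ L : ℂ, Tendsto g (𝓝[{a : ℂ | 0 < ‖a‖ ∧ ‖a‖ < r₀}] 0) (𝓝 L) := by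
  set s : Set ℂ := {a : ℂ | 0 < ‖a‖ ∧ ‖a‖ < r₀} with hs_def
  have hne : (𝓝[s] (0:ℂ)).NeBot := by
    rw [← mem_closure_iff_nhdsWithin_neBot, Metric.mem_closure_iff]
    intro ε hε
    set t : ℝ := min ε r₀ / 2 with ht_def
    have htpos : 0 < t := by positivity
    have ht1 : t < r₀ := by
      have := min_le_right ε r₀
      rw [ht_def]; linarith
    have ht2 : t < ε := by
      have := min_le_left ε r₀
      rw [ht_def]; linarith
    refine ⟨(t:ℂ), ⟨?_, ?_⟩, ?_⟩
    · rw [Complex.norm_real, Real.norm_eq_abs, abs_of_pos htpos]; exact htpos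
    · rw [Complex.norm_real, Real.norm_eq_abs, abs_of_pos htpos]; exact ht1
    · rw [Complex.dist_eq, zero_sub, norm_neg, Complex.norm_real, Real.norm_eq_abs, abs_of_pos htpos]
      exact ht2
  haveI := hne
  -- Cauchy estimate
  have key : ∀ ε > 0, ∃ δ > 0, ∀ a ∈ s, ∀ b ∈ s,
      ‖a‖ < δ → ‖b‖ < δ → dist (g a) (g b) < ε := by
    intro ε hε
    obtain ⟨δ₁, hδ₁pos, hδ₁lt, hI⟩ := small_int hr₀ hu_int (show (0:ℝ) < ε/100 by linarith)
    set I₁ := ∫ t in Ioc (0:ℝ) δ₁, u t with hI₁def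
    have hI₁nn : 0 ≤ I₁ :=
      setIntegral_nonneg measurableSet_Ioc
        (fun t ht => hu_nonneg t ⟨ht.1, ht.2.trans hδ₁lt.le⟩)
    set c : ℝ := δ₁ / 2 with hc_def
    have hc : 0 < c := by positivity
    have h2c : 2 * c = δ₁ := by rw [hc_def]; ring
    have hsub1 : Ioc (0:ℝ) δ₁ ⊆ Ioc 0 r₀ := Ioc_subset_Ioc le_rfl hδ₁lt.le
    have hu_int1 : IntegrableOn u (Ioc 0 δ₁) := hu_int.mono_set hsub1
    obtain ⟨ρ, hρmem, hρle⟩ := good_rho (d := δ₁) hc (le_of_eq h2c)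
      (fun r hr => hu_nonneg r (hsub1 hr)) hu_int1
      (show (0:ℝ) < ε / (400 * c) by positivity)
    have hρpos : 0 < ρ := hc.trans hρmem.1
    have hρδ₁ : ρ ≤ δ₁ := h2c ▸ hρmem.2
    have hρr₀ : ρ < r₀ := lt_of_le_of_lt hρδ₁ hδ₁lt
    have huρ : 0 ≤ u ρ := hu_nonneg ρ ⟨hρpos, hρr₀.le⟩
    set M : ℝ := I₁ / c + ε / (400 * c) with hM_def
    have hM : 0 ≤ M := by positivity
    have hMc : M * (2 * c) = 2 * I₁ + ε / 200 := by
      rw [hM_def]; field_simp; ring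
    have huρρ : u ρ * ρ ≤ 2 * I₁ + ε / 200 := by
      calc u ρ * ρ ≤ M * ρ := mul_le_mul_of_nonneg_right hρle hρpos.le
        _ ≤ M * (2 * c) := mul_le_mul_of_nonneg_left hρmem.2 hM
        _ = 2 * I₁ + ε / 200 := hMc
    refine ⟨c, hc, ?_⟩
    intro a ha b hb haδ hbδ
    obtain ⟨hapos, har₀⟩ := ha
    obtain ⟨hbpos, hbr₀⟩ := hb
    have haρ : ‖a‖ ≤ ρ := (haδ.trans hρmem.1).le
    have hbρ : ‖b‖ ≤ ρ := (hbδ.trans hρmem.1).le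
    -- radial estimates
    have hrad : ∀ x : ℂ, x ∈ s → ‖x‖ ≤ ρ →
        ‖g (↑ρ * Complex.exp (↑(Complex.arg x) * Complex.I)) - g x‖ ≤ I₁ := by
      intro x hx hxρ
      have h := radial_est hu_nonneg hu_int hg_C1 hg_deriv (Complex.arg x)
        (‖x‖) ρ hx.1 hxρ hρr₀
      rw [Complex.norm_mul_exp_arg_mul_I x] at h
      refine h.trans ?_
      apply setIntegral_mono_set hu_int1
      · exact (ae_restrict_iff' measurableSet_Ioc).2
          (ae_of_all _ (fun r hr => hu_nonneg r (hsub1 hr)))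
      · exact HasSubset.Subset.eventuallyLE (Ioc_subset_Ioc hx.1.le hρδ₁)
    have hda := hrad a ⟨hapos, har₀⟩ haρ
    have hdb := hrad b ⟨hbpos, hbr₀⟩ hbρ
    -- arc estimate
    have harc : ‖g (↑ρ * Complex.exp (↑(Complex.arg a) * Complex.I))
        - g (↑ρ * Complex.exp (↑(Complex.arg b) * Complex.I))‖
        ≤ (2 * I₁ + ε / 200) * (2 * Real.pi) := by
      have hbound : ∀ θ₁ θ₂ : ℝ, θ₁ ≤ θ₂ → θ₂ - θ₁ ≤ 2 * Real.pi →
          ‖g (↑ρ * Complex.exp (↑θ₂ * Complex.I))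
            - g (↑ρ * Complex.exp (↑θ₁ * Complex.I))‖
          ≤ (2 * I₁ + ε / 200) * (2 * Real.pi) := by
        intro θ₁ θ₂ h12 hdiff
        have h := arc_est hu_nonneg hg_C1 hg_deriv ρ θ₁ θ₂ hρpos hρr₀ h12
        refine h.trans ?_
        calc u ρ * ρ * (θ₂ - θ₁) ≤ u ρ * ρ * (2 * Real.pi) :=
              mul_le_mul_of_nonneg_left hdiff (by positivity)
          _ ≤ (2 * I₁ + ε / 200) * (2 * Real.pi) :=
              mul_le_mul_of_nonneg_right huρρ (by positivity)
      have hπa₁ := Complex.neg_pi_lt_arg a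
      have hπa₂ := Complex.arg_le_pi a
      have hπb₁ := Complex.neg_pi_lt_arg b
      have hπb₂ := Complex.arg_le_pi b
      rcases le_total (Complex.arg a) (Complex.arg b) with h | h
      · rw [norm_sub_rev]
        exact hbound _ _ h (by linarith)
      · exact hbound _ _ h (by linarith)
    have htri : dist (g a) (g b) ≤ I₁ + (2 * I₁ + ε / 200) * (2 * Real.pi) + I₁ := by
      have h4 := dist_triangle4 (g a)
        (g (↑ρ * Complex.exp (↑(Complex.arg a) * Complex.I)))
        (g (↑ρ * Complex.exp (↑(Complex.arg b) * Complex.I))) (g b)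
      rw [dist_eq_norm, dist_eq_norm, dist_eq_norm, dist_eq_norm] at h4
      rw [dist_eq_norm]
      have e1 : ‖g a - g (↑ρ * Complex.exp (↑(Complex.arg a) * Complex.I))‖ ≤ I₁ := by
        rw [norm_sub_rev]; exact hda
      have e3 : ‖g (↑ρ * Complex.exp (↑(Complex.arg b) * Complex.I)) - g b‖ ≤ I₁ := hdb
      linarith
    have hπ4 : Real.pi ≤ 4 := Real.pi_le_four
    have hπ0 : 0 ≤ Real.pi := Real.pi_pos.le
    have hmul : (2 * I₁ + ε / 200) * (2 * Real.pi) ≤ (2 * I₁ + ε / 200) * 8 :=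
      mul_le_mul_of_nonneg_left (by linarith) (by positivity)
    calc dist (g a) (g b) ≤ I₁ + (2 * I₁ + ε / 200) * (2 * Real.pi) + I₁ := htri
      _ ≤ I₁ + (2 * I₁ + ε / 200) * 8 + I₁ := by linarith
      _ < ε := by linarith
  -- Cauchy, hence convergent
  have hC : Cauchy (Filter.map g (𝓝[s] (0:ℂ))) := by
    rw [Metric.cauchy_iff]
    refine ⟨Filter.map_neBot, ?_⟩
    intro ε hε
    obtain ⟨δ, hδ, H⟩ := key ε hε
    refine ⟨g '' (s ∩ Metric.ball 0 δ), image_mem_map (inter_mem self_mem_nhdsWithin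
      (mem_nhdsWithin_of_mem_nhds (Metric.ball_mem_nhds 0 hδ))), ?_⟩
    rintro x ⟨a, ⟨has, hab⟩, rfl⟩ y ⟨b, ⟨hbs, hbb⟩, rfl⟩
    apply H a has b hbs
    · simpa [Metric.mem_ball, Complex.dist_eq] using hab
    · simpa [Metric.mem_ball, Complex.dist_eq] using hbb
  obtain ⟨L, hL⟩ := cauchy_map_iff_exists_tendsto.1 hC
  exact ⟨L, hL⟩
end

section
/- Let ν : (0, R) → ℝ be a nondecreasing nonnegative function with limit ν(0⁺) = lim_{r→0⁺} ν(r). If ∫₀^{r₀} (ν(r) − ν(0⁺))/r dr < ∞ for some 0 < r₀ < R, then ∫₀^{r₀} (ν(r) − ν(r/2))/r · |log r| dr < ∞. -/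
open MeasureTheory Set Filter Topology
open scoped ENNReal NNReal

/-- Change of variables `r ↦ r/2` for lintegrals over `Ioo 0 ρ`. -/
lemma lint_half_scale (G : ℝ → ℝ≥0∞) (ρ : ℝ)
    (hG : AEMeasurable G (volume.restrict (Ioo 0 (ρ/2)))) :
    ∫⁻ r in Ioo 0 ρ, G (r / 2) = 2 * ∫⁻ s in Ioo 0 (ρ/2), G s := by
  set H := (Ioo (0:ℝ) (ρ/2)).indicator G with hHdef
  have hH : AEMeasurable H volume :=
    (aemeasurable_indicator_iff measurableSet_Ioo).mpr hG
  have h1 : ∫⁻ r in Ioo 0 ρ, G (r/2) = ∫⁻ r, H (r/2) := by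
    rw [← lintegral_indicator measurableSet_Ioo]
    congr 1; funext r
    by_cases h : r ∈ Ioo (0:ℝ) ρ
    · rw [indicator_of_mem h, hHdef, indicator_of_mem]
      exact ⟨by linarith [h.1], by linarith [h.2]⟩
    · rw [indicator_of_notMem h, hHdef, indicator_of_notMem]
      intro hc
      exact h ⟨by linarith [hc.1], by linarith [hc.2]⟩
  have hmap : Measure.map (fun r : ℝ => (2:ℝ)⁻¹ * r) volume
      = ENNReal.ofReal |((2:ℝ)⁻¹)⁻¹| • volume := Real.map_volume_mul_left (by norm_num)
  have hmap2 : Measure.map (fun r : ℝ => (2:ℝ)⁻¹ * r) volume = (2:ℝ≥0∞) • volume := by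
    rw [hmap]; norm_num
  have hH2 : AEMeasurable H (Measure.map (fun r : ℝ => (2:ℝ)⁻¹ * r) volume) := by
    rw [hmap2]; exact hH.smul_measure _
  have h2 : ∫⁻ r, H (r/2) = 2 * ∫⁻ x, H x := by
    have : ∀ r : ℝ, H (r/2) = H ((2:ℝ)⁻¹ * r) := by intro r; rw [inv_mul_eq_div]
    simp_rw [this]
    rw [← lintegral_map' hH2 (aemeasurable_id.const_mul _), hmap2,
      lintegral_smul_measure, smul_eq_mul]
  have h3 : ∫⁻ x, H x = ∫⁻ s in Ioo 0 (ρ/2), G s :=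
    lintegral_indicator measurableSet_Ioo G
  rw [h1, h2, h3]

theorem stmt2 (R r₀ ν₀ : ℝ) (hr₀ : 0 < r₀) (hr₀R : r₀ < R)
    (ν : ℝ → ℝ) (hmono : MonotoneOn ν (Ioo 0 R))
    (hnonneg : ∀ r ∈ Ioo (0:ℝ) R, 0 ≤ ν r)
    (hlim : Tendsto ν (𝓝[>] 0) (𝓝 ν₀))
    (hint : IntegrableOn (fun r => (ν r - ν₀) / r) (Ioo 0 r₀)) :
    IntegrableOn (fun r => (ν r - ν (r / 2)) / r * |Real.log r|) (Ioo 0 r₀) := by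
  set μ := volume.restrict (Ioo (0:ℝ) r₀) with hμdef
  -- ν₀ is a lower bound for ν on (0, R)
  have hν₀le : ∀ s ∈ Ioo (0:ℝ) R, ν₀ ≤ ν s := by
    intro s hs
    refine le_of_tendsto hlim ?_
    filter_upwards [Ioo_mem_nhdsGT_of_mem ⟨le_refl (0:ℝ), hs.1⟩] with t ht
    exact hmono ⟨ht.1, ht.2.trans hs.2⟩ hs ht.2.le
  -- measurability facts
  have hνae : AEMeasurable ν μ :=
    aemeasurable_restrict_of_monotoneOn measurableSet_Ioo
      (hmono.mono (Ioo_subset_Ioo le_rfl hr₀R.le))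
  have hν2mono : MonotoneOn (fun r => ν (r/2)) (Ioo (0:ℝ) r₀) := by
    intro x hx y hy hxy
    exact hmono ⟨by linarith [hx.1], by linarith [hx.2]⟩
      ⟨by linarith [hy.1], by linarith [hy.2]⟩ (by linarith)
  have hν2ae : AEMeasurable (fun r => ν (r/2)) μ :=
    aemeasurable_restrict_of_monotoneOn measurableSet_Ioo hν2mono
  set F : ℝ → ℝ≥0∞ := fun r => ENNReal.ofReal ((ν r - ν₀)/r) with hFdef
  set q : ℝ → ℝ≥0∞ := fun r => ENNReal.ofReal ((ν r - ν (r/2))/r) with hqdef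
  set w : ℝ → ℝ≥0∞ := fun r => ENNReal.ofReal ((ν (r/2) - ν₀)/r) with hwdef
  have hFae : AEMeasurable F μ :=
    ((hνae.sub aemeasurable_const).div aemeasurable_id).ennreal_ofReal
  have hqae : AEMeasurable q μ := ((hνae.sub hν2ae).div aemeasurable_id).ennreal_ofReal
  have hwae : AEMeasurable w μ :=
    ((hν2ae.sub aemeasurable_const).div aemeasurable_id).ennreal_ofReal
  set Φ : ℝ → ℝ≥0∞ := fun ρ => ∫⁻ r in Ioo 0 ρ, F r with hΦdef
  have hΦtop : Φ r₀ < ⊤ := by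
    refine lt_of_le_of_lt (lintegral_mono fun r => ?_) hint.2
    rw [Real.enorm_eq_ofReal_abs]
    exact ENNReal.ofReal_le_ofReal (le_abs_self _)
  -- the key recursion
  have key : ∀ ρ : ℝ, ρ ≤ r₀ → (∫⁻ r in Ioo 0 ρ, q r) + Φ (ρ/2) = Φ ρ := by
    intro ρ hρ
    have hle : volume.restrict (Ioo (0:ℝ) ρ) ≤ μ :=
      Measure.restrict_mono (Ioo_subset_Ioo le_rfl hρ) le_rfl
    have hq' : AEMeasurable q (volume.restrict (Ioo (0:ℝ) ρ)) := hqae.mono_measure hle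
    have hsum : ∫⁻ r in Ioo 0 ρ, (q r + w r) = ∫⁻ r in Ioo 0 ρ, F r := by
      apply lintegral_congr_ae
      filter_upwards [ae_restrict_mem measurableSet_Ioo] with r hr
      have hr0 : (0:ℝ) < r := hr.1
      have hrR : r < R := by linarith [hr.2]
      have hmem : r ∈ Ioo (0:ℝ) R := ⟨hr0, hrR⟩
      have hmem2 : r/2 ∈ Ioo (0:ℝ) R := ⟨by linarith, by linarith⟩
      have h1 : 0 ≤ (ν r - ν (r/2))/r :=
        div_nonneg (sub_nonneg.mpr (hmono hmem2 hmem (by linarith))) hr0.le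
      have h2 : 0 ≤ (ν (r/2) - ν₀)/r :=
        div_nonneg (sub_nonneg.mpr (hν₀le _ hmem2)) hr0.le
      rw [hqdef, hwdef, hFdef]
      rw [← ENNReal.ofReal_add h1 h2]
      congr 1
      rw [← add_div]
      ring_nf
    have hw2 : ∫⁻ r in Ioo 0 ρ, w r = Φ (ρ/2) := by
      have hcong : ∫⁻ r in Ioo 0 ρ, w r = ∫⁻ r in Ioo 0 ρ, 2⁻¹ * F (r/2) := by
        apply lintegral_congr_ae
        filter_upwards [ae_restrict_mem measurableSet_Ioo] with r hr
        have hr0 : (0:ℝ) < r := hr.1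
        have heq : (ν (r/2) - ν₀)/r = 2⁻¹ * ((ν (r/2) - ν₀)/(r/2)) := by
          field_simp
        rw [hwdef, hFdef]
        simp only []
        rw [heq, ENNReal.ofReal_mul (by norm_num)]
        congr 1
        rw [ENNReal.ofReal_inv_of_pos (by norm_num : (0:ℝ) < 2)]
        norm_num
      have hF' : AEMeasurable F (volume.restrict (Ioo 0 (ρ/2))) :=
        hFae.mono_measure
          (Measure.restrict_mono (Ioo_subset_Ioo le_rfl (by linarith)) le_rfl)
      rw [hcong, lintegral_const_mul' _ _ (by norm_num : (2:ℝ≥0∞)⁻¹ ≠ ⊤),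
        lint_half_scale F ρ hF', ← mul_assoc,
        ENNReal.inv_mul_cancel (by norm_num) (by norm_num), one_mul]
    rw [← hw2, ← lintegral_add_left' hq']
    exact hsum
  -- dyadic pieces
  set S : ℕ → ℝ≥0∞ := fun j => ∫⁻ r in Ioo 0 (r₀/2^j), q r with hSdef
  have hpow : ∀ j : ℕ, r₀/2^j ≤ r₀ := by
    intro j
    apply div_le_self hr₀.le
    exact one_le_pow₀ one_le_two
  have htel : ∀ N : ℕ, (∑ j ∈ Finset.range N, S j) + Φ (r₀/2^N) = Φ r₀ := by
    intro N
    induction N with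
    | zero => simp
    | succ n ih =>
      rw [Finset.sum_range_succ, add_assoc]
      have h2 : r₀/2^(n+1) = (r₀/2^n)/2 := by rw [pow_succ]; ring
      rw [h2, key _ (hpow n)]
      exact ih
  have htsum : ∑' j, S j ≤ Φ r₀ :=
    Summable.tsum_le_of_sum_range_le ENNReal.summable
      (fun N => by rw [← htel N]; exact le_self_add)
  -- the pointwise log estimate
  have hlog : ∀ r ∈ Ioo (0:ℝ) r₀, ENNReal.ofReal (Real.log (r₀/r))
      ≤ ENNReal.ofReal (Real.log 2)
        * ∑' j : ℕ, (Ioo (0:ℝ) (r₀/2^j)).indicator (fun _ => (1:ℝ≥0∞)) r := by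
    intro r hr
    have hr0 := hr.1
    have hrr : 1 < r₀ / r := (one_lt_div hr0).mpr hr.2
    have hlog2 : (0:ℝ) < Real.log 2 := Real.log_pos one_lt_two
    set x := Real.log (r₀/r) / Real.log 2 with hx
    have hx0 : 0 ≤ x := div_nonneg (Real.log_nonneg hrr.le) hlog2.le
    set m := ⌈x⌉₊ with hm
    have hmem : ∀ j < m, r ∈ Ioo (0:ℝ) (r₀/2^j) := by
      intro j hj
      refine ⟨hr0, ?_⟩
      have hjx : (j:ℝ) < x := Nat.lt_ceil.mp hj
      have hj2 : (j:ℝ) * Real.log 2 < Real.log (r₀/r) := (lt_div_iff₀ hlog2).mp hjx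
      have hlt : Real.log ((2:ℝ)^j) < Real.log (r₀/r) := by
        rw [Real.log_pow]; exact_mod_cast hj2
      have h2j : (2:ℝ)^j < r₀/r :=
        (Real.log_lt_log_iff (by positivity) (by positivity)).mp hlt
      have := (lt_div_iff₀ hr0).mp h2j
      rw [lt_div_iff₀ (by positivity : (0:ℝ) < 2^j)]
      linarith [this]
    calc ENNReal.ofReal (Real.log (r₀/r)) = ENNReal.ofReal (Real.log 2 * x) := by
          congr 1
          rw [hx]
          field_simp
      _ ≤ ENNReal.ofReal (Real.log 2) * m := by
          rw [ENNReal.ofReal_mul hlog2.le]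
          refine mul_le_mul_right ?_ _
          calc ENNReal.ofReal x ≤ ENNReal.ofReal (m : ℝ) :=
                ENNReal.ofReal_le_ofReal (Nat.le_ceil x)
            _ = (m : ℝ≥0∞) := ENNReal.ofReal_natCast m
      _ ≤ _ := by
          refine mul_le_mul_right ?_ _
          calc (m : ℝ≥0∞) = ∑ j ∈ Finset.range m, (1:ℝ≥0∞) := by simp
            _ = ∑ j ∈ Finset.range m,
                (Ioo (0:ℝ) (r₀/2^j)).indicator (fun _ => (1:ℝ≥0∞)) r :=
              Finset.sum_congr rfl (fun j hj => by
                rw [Set.indicator_of_mem (hmem j (Finset.mem_range.mp hj))])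
            _ ≤ _ := ENNReal.sum_le_tsum _
  -- finish
  constructor
  · exact (((hνae.sub hν2ae).div aemeasurable_id).mul
      (Real.measurable_log.abs.aemeasurable)).aestronglyMeasurable
  · rw [hasFiniteIntegral_iff_norm]
    set c₁ := ENNReal.ofReal |Real.log r₀| with hc₁
    set c₂ := ENNReal.ofReal (Real.log 2) with hc₂
    have hbound : ∀ᵐ r ∂μ, ENNReal.ofReal ‖(ν r - ν (r/2))/r * |Real.log r|‖
        ≤ c₁ * q r + c₂ * ∑' j : ℕ, (Ioo (0:ℝ) (r₀/2^j)).indicator q r := by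
      filter_upwards [ae_restrict_mem measurableSet_Ioo] with r hr
      have hr0 : (0:ℝ) < r := hr.1
      have hmem : r ∈ Ioo (0:ℝ) R := ⟨hr0, by linarith [hr.2]⟩
      have hmem2 : r/2 ∈ Ioo (0:ℝ) R := ⟨by linarith, by linarith [hr.2]⟩
      have hγ : 0 ≤ (ν r - ν (r/2))/r :=
        div_nonneg (sub_nonneg.mpr (hmono hmem2 hmem (by linarith))) hr0.le
      have hlognn : 0 ≤ Real.log (r₀/r) := Real.log_nonneg ((one_lt_div hr0).mpr hr.2).le
      have habs : |Real.log r| ≤ |Real.log r₀| + Real.log (r₀/r) := by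
        have hld : Real.log (r₀/r) = Real.log r₀ - Real.log r :=
          Real.log_div (ne_of_gt hr₀) (ne_of_gt hr0)
        have h1 : Real.log r = Real.log r₀ - Real.log (r₀/r) := by linarith
        calc |Real.log r| = |Real.log r₀ - Real.log (r₀/r)| := by rw [← h1]
          _ ≤ |Real.log r₀| + |Real.log (r₀/r)| := abs_sub _ _
          _ = |Real.log r₀| + Real.log (r₀/r) := by rw [abs_of_nonneg hlognn]
      have hnorm : ‖(ν r - ν (r/2))/r * |Real.log r|‖
          = (ν r - ν (r/2))/r * |Real.log r| := by
        rw [Real.norm_eq_abs, abs_of_nonneg (mul_nonneg hγ (abs_nonneg _))]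
      rw [hnorm]
      calc ENNReal.ofReal ((ν r - ν (r/2))/r * |Real.log r|)
          ≤ ENNReal.ofReal ((ν r - ν (r/2))/r * (|Real.log r₀| + Real.log (r₀/r))) :=
            ENNReal.ofReal_le_ofReal (mul_le_mul_of_nonneg_left habs hγ)
        _ = q r * (c₁ + ENNReal.ofReal (Real.log (r₀/r))) := by
            rw [ENNReal.ofReal_mul hγ, ENNReal.ofReal_add (abs_nonneg _) hlognn]
        _ = c₁ * q r + q r * ENNReal.ofReal (Real.log (r₀/r)) := by ring
        _ ≤ c₁ * q r + q r * (c₂ * ∑' j : ℕ,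
              (Ioo (0:ℝ) (r₀/2^j)).indicator (fun _ => (1:ℝ≥0∞)) r) :=
            add_le_add_right (mul_le_mul_right (hlog r hr) _) _
        _ = c₁ * q r + c₂ * ∑' j : ℕ, (Ioo (0:ℝ) (r₀/2^j)).indicator q r := by
            congr 1
            rw [← mul_assoc, mul_comm (q r) c₂, mul_assoc, ← ENNReal.tsum_mul_left]
            refine congrArg (fun z => c₂ * z) (tsum_congr fun j => ?_)
            by_cases hj : r ∈ Ioo (0:ℝ) (r₀/2^j)
            · rw [indicator_of_mem hj, indicator_of_mem hj, mul_one]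
            · rw [indicator_of_notMem hj, indicator_of_notMem hj, mul_zero]
    have hqF : ∫⁻ r, q r ∂μ ≤ Φ r₀ := by
      refine lintegral_mono_ae ?_
      filter_upwards [ae_restrict_mem measurableSet_Ioo] with r hr
      have hr0 : (0:ℝ) < r := hr.1
      have hmem2 : r/2 ∈ Ioo (0:ℝ) R := ⟨by linarith, by linarith [hr.2]⟩
      refine ENNReal.ofReal_le_ofReal ?_
      have h := hν₀le _ hmem2
      gcongr
    have hΦμ : Φ r₀ = ∫⁻ r, F r ∂μ := rfl
    calc ∫⁻ r, ENNReal.ofReal ‖(ν r - ν (r/2))/r * |Real.log r|‖ ∂μ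
        ≤ ∫⁻ r, (c₁ * q r + c₂ * ∑' j : ℕ, (Ioo (0:ℝ) (r₀/2^j)).indicator q r) ∂μ :=
          lintegral_mono_ae hbound
      _ = c₁ * ∫⁻ r, q r ∂μ + c₂ * ∑' j, S j := by
          rw [lintegral_add_left' (hqae.const_mul c₁),
            lintegral_const_mul' c₁ _ ENNReal.ofReal_ne_top,
            lintegral_const_mul' c₂ _ ENNReal.ofReal_ne_top,
            lintegral_tsum (fun j => hqae.indicator measurableSet_Ioo)]
          congr 1
          refine congrArg (fun z => c₂ * z) (tsum_congr fun j => ?_)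
          rw [lintegral_indicator measurableSet_Ioo,
            Measure.restrict_restrict measurableSet_Ioo,
            inter_eq_self_of_subset_left (Ioo_subset_Ioo le_rfl (hpow j))]
      _ ≤ c₁ * Φ r₀ + c₂ * Φ r₀ :=
          add_le_add (mul_le_mul_right (hΦμ ▸ hqF) _) (mul_le_mul_right htsum _)
      _ < ⊤ := by
          apply ENNReal.add_lt_top.mpr
          constructor
          · exact ENNReal.mul_lt_top ENNReal.ofReal_lt_top hΦtop
          · exact ENNReal.mul_lt_top ENNReal.ofReal_lt_top hΦtop
end

section
/- Let ν : (0, R) → ℝ be a nondecreasing nonnegative function with limit ν(0⁺) = lim_{r→0⁺} ν(r). If ∫₀^{r₀} (ν(r) − ν(r/2))/r · |log r| dr < ∞ for some 0 < r₀ < min(R, 1), then ∫₀^{r₀} (ν(r) − ν(0⁺))/r dr < ∞. -/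
open MeasureTheory Set Filter Topology ENNReal

lemma cov_scale (c : ℝ) (hc : 0 < c) (b : ℝ) (G : ℝ → ℝ≥0∞)
    (hG : AEMeasurable G (volume.restrict (Ioo 0 b))) :
    ∫⁻ r in Ioo (0:ℝ) b, G r = ENNReal.ofReal c * ∫⁻ s in Ioo (0:ℝ) (b / c), G (c * s) := by
  have hmap : Measure.map (fun s : ℝ => c * s) volume = ENNReal.ofReal c⁻¹ • volume := by
    simpa [abs_of_pos (inv_pos.2 hc)] using Real.map_volume_mul_left hc.ne'
  have hpre : (fun s : ℝ => c * s) ⁻¹' Ioo 0 b = Ioo 0 (b / c) := by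
    have := preimage_const_mul_Ioo₀ (0:ℝ) b hc
    simpa [zero_div] using this
  have hrm : (Measure.map (fun s : ℝ => c * s) volume).restrict (Ioo 0 b)
      = Measure.map (fun s : ℝ => c * s) (volume.restrict (Ioo 0 (b / c))) := by
    rw [Measure.restrict_map (measurable_const_mul c) measurableSet_Ioo, hpre]
  have hG' : AEMeasurable G (Measure.map (fun s : ℝ => c * s) (volume.restrict (Ioo 0 (b / c)))) := by
    rw [← hrm, hmap, Measure.restrict_smul]
    exact hG.smul_measure _
  have h1 : ∫⁻ s in Ioo (0:ℝ) (b / c), G (c * s)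
      = ∫⁻ r, G r ∂((Measure.map (fun s : ℝ => c * s) volume).restrict (Ioo 0 b)) := by
    rw [hrm, lintegral_map' hG' (measurable_const_mul c).aemeasurable]
  rw [h1, hmap, Measure.restrict_smul, lintegral_smul_measure, smul_eq_mul, ← mul_assoc,
    ← ENNReal.ofReal_mul hc.le, mul_inv_cancel₀ hc.ne', ENNReal.ofReal_one, one_mul]

theorem stmt3 (R r₀ ν₀ : ℝ) (hr₀ : 0 < r₀) (hr₀R : r₀ < min R 1)
    (ν : ℝ → ℝ) (hmono : MonotoneOn ν (Ioo 0 R))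
    (hnonneg : ∀ r ∈ Ioo (0:ℝ) R, 0 ≤ ν r)
    (hlim : Tendsto ν (𝓝[>] 0) (𝓝 ν₀))
    (hint : IntegrableOn (fun r => (ν r - ν (r / 2)) / r * |Real.log r|) (Ioo 0 r₀)) :
    IntegrableOn (fun r => (ν r - ν₀) / r) (Ioo 0 r₀) := by
  have hr₀R' : r₀ < R := lt_of_lt_of_le hr₀R (min_le_left _ _)
  have hr₀1 : r₀ < 1 := lt_of_lt_of_le hr₀R (min_le_right _ _)
  have hsub : Ioo (0:ℝ) r₀ ⊆ Ioo 0 R := Ioo_subset_Ioo le_rfl hr₀R'.le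
  -- membership lemma
  have hmem : ∀ c : ℝ, 1 ≤ c → ∀ r ∈ Ioo (0:ℝ) r₀, r / c ∈ Ioo (0:ℝ) R := by
    intro c hc r hr
    have hc0 : (0:ℝ) < c := lt_of_lt_of_le one_pos hc
    exact ⟨div_pos hr.1 hc0, lt_of_le_of_lt ((div_le_self hr.1.le hc).trans hr.2.le) hr₀R'⟩
  have hmonoC : ∀ c : ℝ, 1 ≤ c → MonotoneOn (fun r => ν (r / c)) (Ioo 0 r₀) := by
    intro c hc a ha b hb hab
    have hc0 : (0:ℝ) < c := lt_of_lt_of_le one_pos hc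
    exact hmono (hmem c hc a ha) (hmem c hc b hb) (by gcongr)
  have haemC : ∀ c : ℝ, 1 ≤ c → AEMeasurable (fun r => ν (r / c)) (volume.restrict (Ioo 0 r₀)) :=
    fun c hc => aemeasurable_restrict_of_monotoneOn measurableSet_Ioo (hmonoC c hc)
  have haeν : AEMeasurable ν (volume.restrict (Ioo 0 r₀)) :=
    aemeasurable_restrict_of_monotoneOn measurableSet_Ioo (hmono.mono hsub)
  -- ν₀ ≤ ν r
  have hν₀ : ∀ r ∈ Ioo (0:ℝ) R, ν₀ ≤ ν r := by
    intro r hr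
    refine le_of_tendsto hlim ?_
    filter_upwards [Ioo_mem_nhdsGT_of_mem (⟨le_rfl, hr.1⟩ : (0:ℝ) ∈ Ico 0 r)] with s hs
    exact hmono ⟨hs.1, hs.2.trans hr.2⟩ hr hs.2.le
  -- one-power facts
  have h2pow : ∀ k : ℕ, (1:ℝ) ≤ 2 ^ k := fun k => one_le_pow₀ (by norm_num)
  have h2pow0 : ∀ k : ℕ, (0:ℝ) < 2 ^ k := fun k => pow_pos two_pos k
  set fh : ℝ → ℝ≥0∞ := fun s => ENNReal.ofReal ((ν s - ν (s / 2)) / s) with hfh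
  set g : ℕ → ℝ → ℝ≥0∞ :=
    fun k r => ENNReal.ofReal ((ν (r / 2 ^ k) - ν (r / 2 ^ (k + 1))) / r) with hg
  have haefh : AEMeasurable fh (volume.restrict (Ioo 0 r₀)) := by
    apply ENNReal.measurable_ofReal.comp_aemeasurable
    exact ((haemC 1 le_rfl).congr (by simp) |>.sub (haemC 2 one_le_two)).div aemeasurable_id
  have haeg : ∀ k, AEMeasurable (g k) (volume.restrict (Ioo 0 r₀)) := by
    intro k
    apply ENNReal.measurable_ofReal.comp_aemeasurable
    exact ((haemC (2 ^ k) (h2pow k)).sub (haemC (2 ^ (k + 1)) (h2pow (k + 1)))).div aemeasurable_id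
  -- nonnegativity of differences
  have hdiff : ∀ r ∈ Ioo (0:ℝ) r₀, ∀ k : ℕ, 0 ≤ ν (r / 2 ^ k) - ν (r / 2 ^ (k + 1)) := by
    intro r hr k
    have h1 := hmem (2 ^ k) (h2pow k) r hr
    have h2 := hmem (2 ^ (k + 1)) (h2pow (k + 1)) r hr
    have : r / 2 ^ (k + 1) ≤ r / 2 ^ k := by
      gcongr
      · exact hr.1.le
      · exact one_le_two
      · exact Nat.le_succ k
    linarith [hmono h2 h1 this]
  -- pointwise telescoping
  have htel : ∀ r ∈ Ioo (0:ℝ) r₀,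
      ∑' k, g k r = ENNReal.ofReal ((ν r - ν₀) / r) := by
    intro r hr
    have hsum : HasSum (fun k => ν (r / 2 ^ k) - ν (r / 2 ^ (k + 1))) (ν r - ν₀) := by
      rw [hasSum_iff_tendsto_nat_of_nonneg (hdiff r hr)]
      have hps : ∀ n, ∑ i ∈ Finset.range n, (ν (r / 2 ^ i) - ν (r / 2 ^ (i + 1)))
          = ν r - ν (r / 2 ^ n) := by
        intro n
        simpa using Finset.sum_range_sub' (fun i => ν (r / 2 ^ i)) n
      simp only [hps]
      have h0 : Tendsto (fun n : ℕ => r / 2 ^ n) atTop (𝓝[>] 0) := by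
        apply tendsto_nhdsWithin_of_tendsto_nhds_of_eventually_within
        · have := (tendsto_pow_atTop_nhds_zero_of_lt_one (by norm_num : (0:ℝ) ≤ 1/2)
            (by norm_num : (1:ℝ)/2 < 1)).const_mul r
          simpa [div_eq_mul_inv, inv_pow, one_div, mul_comm] using this
        · exact Eventually.of_forall fun n => div_pos hr.1 (h2pow0 n)
      exact tendsto_const_nhds.sub (hlim.comp h0)
    have hr0 : (0:ℝ) < r := hr.1
    calc ∑' k, g k r
        = ∑' k, ENNReal.ofReal (ν (r / 2 ^ k) - ν (r / 2 ^ (k + 1))) * ENNReal.ofReal r⁻¹ := by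
          refine tsum_congr fun k => ?_
          show ENNReal.ofReal ((ν (r / 2 ^ k) - ν (r / 2 ^ (k + 1))) / r) = _
          rw [div_eq_mul_inv (ν (r / 2 ^ k) - ν (r / 2 ^ (k + 1))) r,
            ENNReal.ofReal_mul (hdiff r hr k)]
      _ = ENNReal.ofReal (ν r - ν₀) * ENNReal.ofReal r⁻¹ := by
          rw [ENNReal.tsum_mul_right, ← ENNReal.ofReal_tsum_of_nonneg (hdiff r hr) hsum.summable,
            hsum.tsum_eq]
      _ = ENNReal.ofReal ((ν r - ν₀) / r) := by
          rw [div_eq_mul_inv, ENNReal.ofReal_mul (by linarith [hν₀ r (hsub hr)])]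

  -- nonnegativity of f on S
  have hfpos : ∀ s ∈ Ioo (0:ℝ) r₀, 0 ≤ (ν s - ν (s / 2)) / s := by
    intro s hs
    have h1 : s ∈ Ioo 0 R := hsub hs
    have h2 : s / 2 ∈ Ioo 0 R := hmem 2 one_le_two s hs
    have h3 : s / 2 ≤ s := div_le_self hs.1.le one_le_two
    exact div_nonneg (by linarith [hmono h2 h1 h3]) hs.1.le
  have hFnonneg : 0 ≤ᵐ[volume.restrict (Ioo 0 r₀)]
      fun r => (ν r - ν (r / 2)) / r * |Real.log r| := by
    filter_upwards [ae_restrict_mem measurableSet_Ioo] with r hr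
    exact mul_nonneg (hfpos r hr) (abs_nonneg _)
  set M : ℝ≥0∞ := ∫⁻ r in Ioo (0:ℝ) r₀,
      ENNReal.ofReal ((ν r - ν (r / 2)) / r * |Real.log r|) with hM
  have hMfin : M < ⊤ := (hasFiniteIntegral_iff_ofReal hFnonneg).1 hint.2
  set A : ℝ := (Real.log 2)⁻¹ + (-Real.log r₀)⁻¹ with hA
  have hlog2 : 0 < Real.log 2 := Real.log_pos one_lt_two
  have hlogr₀ : Real.log r₀ < 0 := Real.log_neg hr₀ hr₀1
  have hA0 : 0 ≤ A :=
    add_nonneg (inv_nonneg.2 hlog2.le) (inv_nonneg.2 (by linarith))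
  -- counting bound
  have hcount : ∀ r ∈ Ioo (0:ℝ) r₀, ∀ F : Finset ℕ,
      (((F.filter fun k => r < r₀ / 2 ^ k).card : ℝ)) ≤ A * |Real.log r| := by
    intro r hr F
    have hr0 := hr.1
    have hlogr : Real.log r < Real.log r₀ := Real.log_lt_log hr0 hr.2
    set t : ℝ := (Real.log r₀ - Real.log r) / Real.log 2 with ht
    have ht0 : 0 ≤ t := div_nonneg (by linarith) hlog2.le
    have hsubF : F.filter (fun k => r < r₀ / 2 ^ k) ⊆ Finset.range ⌈t⌉₊ := by
      intro k hk
      rw [Finset.mem_filter] at hk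
      rw [Finset.mem_range, Nat.lt_ceil]
      have h2k : (2:ℝ) ^ k < r₀ / r := by
        rw [lt_div_iff₀ hr0]
        have := (lt_div_iff₀ (h2pow0 k)).1 hk.2
        linarith
      have hlog := Real.log_lt_log (h2pow0 k) h2k
      rw [Real.log_pow, Real.log_div (ne_of_gt hr₀) (ne_of_gt hr0)] at hlog
      rw [ht, lt_div_iff₀ hlog2]
      exact hlog
    have hcard : (((F.filter fun k => r < r₀ / 2 ^ k).card : ℝ)) ≤ (⌈t⌉₊ : ℝ) := by
      have := Finset.card_le_card hsubF
      rw [Finset.card_range] at this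
      exact_mod_cast this
    have h1 : (⌈t⌉₊ : ℝ) < t + 1 := Nat.ceil_lt_add_one ht0
    have habs : |Real.log r| = -Real.log r := abs_of_neg (by linarith)
    have h2 : t ≤ |Real.log r| / Real.log 2 := by
      rw [habs, ht]
      gcongr
      linarith
    have h3 : (1:ℝ) ≤ |Real.log r| / (-Real.log r₀) := by
      rw [habs]
      rw [one_le_div (by linarith)]
      linarith
    calc (((F.filter fun k => r < r₀ / 2 ^ k).card : ℝ))
        ≤ t + 1 := by linarith
      _ ≤ |Real.log r| / Real.log 2 + |Real.log r| / (-Real.log r₀) := add_le_add h2 h3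
      _ = A * |Real.log r| := by rw [hA]; ring
  -- pointwise bound on finite sums
  have hptwise : ∀ F : Finset ℕ, ∀ r ∈ Ioo (0:ℝ) r₀,
      ∑ k ∈ F, (Ioo (0:ℝ) (r₀ / 2 ^ k)).indicator fh r
        ≤ ENNReal.ofReal A * ENNReal.ofReal ((ν r - ν (r / 2)) / r * |Real.log r|) := by
    intro F r hr
    classical
    have heq : ∑ k ∈ F, (Ioo (0:ℝ) (r₀ / 2 ^ k)).indicator fh r
        = ((F.filter fun k => r < r₀ / 2 ^ k).card : ℝ≥0∞) * fh r := by
      calc ∑ k ∈ F, (Ioo (0:ℝ) (r₀ / 2 ^ k)).indicator fh r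
          = ∑ k ∈ F, if r < r₀ / 2 ^ k then fh r else 0 :=
            Finset.sum_congr rfl fun k _ => by
              by_cases h : r < r₀ / 2 ^ k <;>
                simp [indicator_apply, mem_Ioo, hr.1, h]
        _ = ∑ _k ∈ F.filter (fun k => r < r₀ / 2 ^ k), fh r := (Finset.sum_filter _ _).symm
        _ = ((F.filter fun k => r < r₀ / 2 ^ k).card : ℝ≥0∞) * fh r := by
            rw [Finset.sum_const, nsmul_eq_mul]
    rw [heq]
    have h1 : ((F.filter fun k => r < r₀ / 2 ^ k).card : ℝ≥0∞)
        ≤ ENNReal.ofReal (A * |Real.log r|) := by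
      rw [← ENNReal.ofReal_natCast]
      exact ENNReal.ofReal_le_ofReal (hcount r hr F)
    calc ((F.filter fun k => r < r₀ / 2 ^ k).card : ℝ≥0∞) * fh r
        ≤ ENNReal.ofReal (A * |Real.log r|) * ENNReal.ofReal ((ν r - ν (r / 2)) / r) :=
          mul_le_mul' h1 le_rfl
      _ = ENNReal.ofReal A * ENNReal.ofReal ((ν r - ν (r / 2)) / r * |Real.log r|) := by
          rw [← ENNReal.ofReal_mul (mul_nonneg hA0 (abs_nonneg _)), ← ENNReal.ofReal_mul hA0]
          congr 1
          ring
  -- change of variables for each k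
  have hIk : ∀ k : ℕ, ∫⁻ r in Ioo (0:ℝ) r₀, g k r
      = ∫⁻ r in Ioo (0:ℝ) r₀, (Ioo (0:ℝ) (r₀ / 2 ^ k)).indicator fh r := by
    intro k
    have hc0 := h2pow0 k
    have step1 := cov_scale (2 ^ k) hc0 r₀ (g k) (haeg k)
    have harg : ∀ s : ℝ, g k (2 ^ k * s) = ENNReal.ofReal ((2:ℝ) ^ k)⁻¹ * fh s := by
      intro s
      have e1 : (2:ℝ) ^ k * s / 2 ^ k = s := mul_div_cancel_left₀ s hc0.ne'
      have e2 : (2:ℝ) ^ k * s / 2 ^ (k + 1) = s / 2 := by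
        rw [pow_succ]
        exact mul_div_mul_left s 2 hc0.ne'
      have e3 : (ν s - ν (s / 2)) / (2 ^ k * s) = ((2:ℝ) ^ k)⁻¹ * ((ν s - ν (s / 2)) / s) := by
        ring
      show ENNReal.ofReal ((ν (2 ^ k * s / 2 ^ k) - ν (2 ^ k * s / 2 ^ (k + 1))) / (2 ^ k * s)) = _
      rw [e1, e2, e3, ENNReal.ofReal_mul (inv_nonneg.2 hc0.le)]
    rw [step1]
    simp only [harg]
    rw [lintegral_const_mul' _ _ ENNReal.ofReal_ne_top, ← mul_assoc,
      ← ENNReal.ofReal_mul hc0.le, mul_inv_cancel₀ hc0.ne', ENNReal.ofReal_one, one_mul]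
    rw [lintegral_indicator measurableSet_Ioo, Measure.restrict_restrict measurableSet_Ioo,
      inter_eq_left.2 (Ioo_subset_Ioo le_rfl (div_le_self hr₀.le (h2pow k)))]
  -- conclude
  have hnn : 0 ≤ᵐ[volume.restrict (Ioo 0 r₀)] fun r => (ν r - ν₀) / r := by
    filter_upwards [ae_restrict_mem measurableSet_Ioo] with r hr
    exact div_nonneg (sub_nonneg.2 (hν₀ r (hsub hr))) hr.1.le
  refine ⟨(((haeν.sub aemeasurable_const).div aemeasurable_id).aestronglyMeasurable), ?_⟩
  rw [hasFiniteIntegral_iff_ofReal hnn]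
  calc ∫⁻ r in Ioo (0:ℝ) r₀, ENNReal.ofReal ((ν r - ν₀) / r)
      = ∫⁻ r in Ioo (0:ℝ) r₀, ∑' k, g k r := by
        refine lintegral_congr_ae ?_
        filter_upwards [ae_restrict_mem measurableSet_Ioo] with r hr
        exact (htel r hr).symm
    _ = ∑' k, ∫⁻ r in Ioo (0:ℝ) r₀, g k r := lintegral_tsum haeg
    _ = ∑' k, ∫⁻ r in Ioo (0:ℝ) r₀, (Ioo (0:ℝ) (r₀ / 2 ^ k)).indicator fh r := tsum_congr hIk
    _ ≤ ENNReal.ofReal A * M := by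
        refine Summable.tsum_le_of_sum_le ENNReal.summable fun F => ?_
        rw [← lintegral_finset_sum' F fun k _ => (haefh.indicator measurableSet_Ioo)]
        rw [hM, ← lintegral_const_mul' _ _ ENNReal.ofReal_ne_top]
        refine lintegral_mono_ae ?_
        filter_upwards [ae_restrict_mem measurableSet_Ioo] with r hr
        exact hptwise F r hr
    _ < ⊤ := ENNReal.mul_lt_top ENNReal.ofReal_lt_top hMfin
end

section
/- Let u : (0, r₀] → [0, ∞) be measurable and suppose f : D*(0, r₀) → ℝ is C², bounded, radially symmetric (f(a) = F(|a|) for some F), and satisfies |Δf(a)| ≤ u(|a|) with ∫₀^{r₀} r|log r| u(r) dr < ∞. Then F(r) has a finite limit as r → 0⁺. -/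
open MeasureTheory Set Filter Topology
open scoped ENNReal NNReal
open intervalIntegral

/-- The Laplacian of a function on `ℂ ≅ ℝ²`: sum of second derivatives in the
directions `1` and `I`. -/
noncomputable def laplacianC (f : ℂ → ℝ) (a : ℂ) : ℝ :=
  iteratedFDeriv ℝ 2 f a ![1, 1] + iteratedFDeriv ℝ 2 f a ![Complex.I, Complex.I]

/-- Second directional derivative along a line, for a C² function on an open set. -/
lemma curve_second_deriv {f : ℂ → ℝ} {S : Set ℂ} (hS : IsOpen S)
    (hf : ContDiffOn ℝ 2 f S) {a : ℂ} (ha : a ∈ S) (v : ℂ) :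
    iteratedFDeriv ℝ 2 f a ![v, v] = deriv (deriv (fun t : ℝ => f (a + t • v))) 0 := by
  set D := fderiv ℝ f with hD
  have hDdiff : DifferentiableOn ℝ D S := by
    have h : (1:WithTop ℕ∞) + 1 ≤ 2 := by norm_num
    exact (hf.fderiv_of_isOpen hS h).differentiableOn one_ne_zero
  have hfdiff : DifferentiableOn ℝ f S := hf.differentiableOn two_ne_zero
  -- the curve
  have hg : ∀ t : ℝ, HasDerivAt (fun s : ℝ => a + s • v) v t := by
    intro t
    simpa using ((hasDerivAt_id t).smul_const v).const_add a
  -- neighborhood where curve is in S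
  have hV : ∀ᶠ t in 𝓝 (0:ℝ), a + t • v ∈ S := by
    have hc : Continuous (fun t : ℝ => a + t • v) := by continuity
    have : (fun t : ℝ => a + t • v) ⁻¹' S ∈ 𝓝 (0:ℝ) := by
      apply (hS.preimage hc).mem_nhds; simpa using ha
    exact this
  -- first derivative of the curve composition
  have h1 : ∀ᶠ t in 𝓝 (0:ℝ), deriv (fun s : ℝ => f (a + s • v)) t = D (a + t • v) v := by
    filter_upwards [hV] with t ht
    have hfd : DifferentiableAt ℝ f (a + t • v) := hfdiff.differentiableAt (hS.mem_nhds ht)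
    have := hfd.hasFDerivAt.comp_hasDerivAt t (hg t)
    exact this.deriv
  have h2 : deriv (deriv (fun s : ℝ => f (a + s • v))) 0
      = deriv (fun t : ℝ => D (a + t • v) v) 0 := by
    apply Filter.EventuallyEq.deriv_eq h1
  -- second derivative
  have hDd : DifferentiableAt ℝ D a := hDdiff.differentiableAt (hS.mem_nhds ha)
  have h3 : HasDerivAt (fun t : ℝ => D (a + t • v)) (fderiv ℝ D a v) 0 := by
    have hDd' : HasFDerivAt D (fderiv ℝ D a) (a + (0:ℝ) • v) := by simpa using hDd.hasFDerivAt
    exact hDd'.comp_hasDerivAt 0 (hg 0)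
  have h4 : HasDerivAt (fun t : ℝ => D (a + t • v) v) (fderiv ℝ D a v v) 0 := by
    have := (ContinuousLinearMap.apply ℝ ℝ v).hasFDerivAt.comp_hasDerivAt 0 h3
    exact this
  rw [iteratedFDeriv_two_apply, h2, h4.deriv]
  simp [hD]


section
variable {r₀ : ℝ} (hr₀ : 0 < r₀) {f : ℂ → ℝ} {F : ℝ → ℝ}

lemma F_contDiffOn (hf_radial : ∀ a : ℂ, f a = F (‖a‖))
    (hf_C2 : ContDiffOn ℝ 2 f {a : ℂ | 0 < ‖a‖ ∧ ‖a‖ < r₀}) :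
    ContDiffOn ℝ 2 F (Ioo 0 r₀) := by
  set S := {a : ℂ | 0 < ‖a‖ ∧ ‖a‖ < r₀} with hSdef
  have hS : IsOpen S := by
    have : Continuous (fun a : ℂ => ‖a‖) := continuous_norm
    exact (isOpen_Ioo.preimage this : IsOpen ((fun a : ℂ => ‖a‖) ⁻¹' Ioo 0 r₀))
  intro r hr
  apply ContDiffAt.contDiffWithinAt
  have hmem : ((r:ℂ)) ∈ S := by
    simp only [hSdef, mem_setOf_eq, Complex.norm_real, Real.norm_eq_abs, abs_of_pos hr.1]
    exact ⟨hr.1, hr.2⟩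
  have h1 : ContDiffAt ℝ 2 (fun s : ℝ => f (s : ℂ)) r :=
    (hf_C2.contDiffAt (hS.mem_nhds hmem)).comp r
      (Complex.ofRealCLM.contDiff.contDiffAt)
  apply h1.congr_of_eventuallyEq
  filter_upwards [eventually_gt_nhds hr.1] with s hs
  rw [hf_radial, Complex.norm_real, Real.norm_eq_abs, abs_of_pos hs]

end


section
variable {r₀ : ℝ} {f : ℂ → ℝ} {F : ℝ → ℝ}

lemma lap_radial (hr₀ : 0 < r₀)
    (hf_radial : ∀ a : ℂ, f a = F (‖a‖))
    (hf_C2 : ContDiffOn ℝ 2 f {a : ℂ | 0 < ‖a‖ ∧ ‖a‖ < r₀})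
    (hF₁ : ∀ s ∈ Ioo (0:ℝ) r₀, HasDerivAt F (deriv F s) s)
    (hF₂ : ∀ s ∈ Ioo (0:ℝ) r₀, HasDerivAt (deriv F) (deriv (deriv F) s) s)
    {r : ℝ} (hr : r ∈ Ioo (0:ℝ) r₀) :
    laplacianC f (r:ℂ) = deriv (deriv F) r + deriv F r / r := by
  set S := {a : ℂ | 0 < ‖a‖ ∧ ‖a‖ < r₀} with hSdef
  have hS : IsOpen S :=
    (isOpen_Ioo.preimage continuous_norm : IsOpen ((fun a : ℂ => ‖a‖) ⁻¹' Ioo 0 r₀))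
  have hmem : ((r:ℂ)) ∈ S := by
    simp only [hSdef, mem_setOf_eq, Complex.norm_real, Real.norm_eq_abs, abs_of_pos hr.1]
    exact ⟨hr.1, hr.2⟩
  set F₁ := deriv F with hF₁def
  set F₂ := deriv (deriv F) with hF₂def
  -- first direction : v = 1
  have e1 : iteratedFDeriv ℝ 2 f (r:ℂ) ![1,1] = F₂ r := by
    rw [curve_second_deriv hS hf_C2 hmem 1]
    have key : ∀ t ∈ Ioo (-r) (r₀ - r),
        deriv (fun s : ℝ => f ((r:ℂ) + s • 1)) t = F₁ (r + t) := by
      intro t ht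
      have heq : (fun s : ℝ => f ((r:ℂ) + s • 1)) =ᶠ[𝓝 t] (fun s : ℝ => F (r + s)) := by
        filter_upwards [eventually_gt_nhds (show -r < t from ht.1)] with s hs
        rw [show (r:ℂ) + s • 1 = ((r + s : ℝ) : ℂ) by rw [Complex.real_smul]; push_cast; ring]
        rw [hf_radial, Complex.norm_real, Real.norm_eq_abs, abs_of_pos (by linarith)]
      rw [heq.deriv_eq]
      have hmem' : r + t ∈ Ioo (0:ℝ) r₀ := ⟨by linarith [ht.1], by linarith [ht.2]⟩
      have : HasDerivAt (fun s : ℝ => F (r + s)) (F₁ (r + t) * 1) t :=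
        (hF₁ (r + t) hmem').comp t ((hasDerivAt_id t).const_add r)
      simpa using this.deriv
    have heq2 : deriv (fun s : ℝ => f ((r:ℂ) + s • 1)) =ᶠ[𝓝 (0:ℝ)]
        (fun t => F₁ (r + t)) := by
      filter_upwards [isOpen_Ioo.eventually_mem
        (show (0:ℝ) ∈ Ioo (-r) (r₀ - r) by constructor <;> [linarith [hr.1]; linarith [hr.2]])]
        with t ht using key t ht
    rw [heq2.deriv_eq]
    have : HasDerivAt (fun t : ℝ => F₁ (r + t)) (F₂ (r + 0) * 1) 0 :=
      (hF₂ (r + 0) (by simpa using hr)).comp 0 ((hasDerivAt_id 0).const_add r)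
    simpa using this.deriv
  -- second direction : v = I
  have e2 : iteratedFDeriv ℝ 2 f (r:ℂ) ![Complex.I, Complex.I] = F₁ r / r := by
    rw [curve_second_deriv hS hf_C2 hmem Complex.I]
    set ψ : ℝ → ℝ := fun t => Real.sqrt (r^2 + t^2) with hψdef
    have hq_pos : ∀ t : ℝ, 0 < r^2 + t^2 := fun t =>
      add_pos_of_pos_of_nonneg (pow_pos hr.1 2) (sq_nonneg t)
    have hψpos : ∀ t, 0 < ψ t := fun t => Real.sqrt_pos.2 (hq_pos t)
    have hψ0 : ψ 0 = r := by
      simp [hψdef, Real.sqrt_sq (le_of_lt hr.1)]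
    have hψd : ∀ t, HasDerivAt ψ (t / ψ t) t := by
      intro t
      have hq : HasDerivAt (fun s : ℝ => r^2 + s^2) (2 * t) t := by
        simpa using ((hasDerivAt_pow 2 t).const_add (r^2))
      have hs : HasDerivAt Real.sqrt (1 / (2 * Real.sqrt (r^2 + t^2))) (r^2 + t^2) :=
        Real.hasDerivAt_sqrt (hq_pos t).ne'
      have := hs.comp t hq
      refine this.congr_deriv ?_
      have h := (hψpos t).ne'
      change 1 / (2 * ψ t) * (2 * t) = t / ψ t
      rw [div_mul_eq_mul_div, one_mul, mul_div_mul_left _ _ two_ne_zero]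
    have hfun : (fun t : ℝ => f ((r:ℂ) + t • Complex.I)) = fun t => F (ψ t) := by
      funext t
      rw [show (r:ℂ) + t • Complex.I = (r:ℝ) + (t:ℝ) * Complex.I by
        rw [Complex.real_smul]]
      rw [hf_radial, Complex.norm_add_mul_I]
    rw [hfun]
    set U := {t : ℝ | r^2 + t^2 < r₀^2} with hUdef
    have hUopen : IsOpen U := isOpen_lt (by continuity) continuous_const
    have hU0 : (0:ℝ) ∈ U := by
      simp only [hUdef, mem_setOf_eq]
      nlinarith [hr.1, hr.2]
    have hψmem : ∀ t ∈ U, ψ t ∈ Ioo (0:ℝ) r₀ := by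
      intro t ht
      exact ⟨hψpos t, (Real.sqrt_lt' hr₀).2 ht⟩
    have key : ∀ t ∈ U, deriv (fun s => F (ψ s)) t = F₁ (ψ t) * (t / ψ t) := by
      intro t ht
      exact ((hF₁ (ψ t) (hψmem t ht)).comp t (hψd t)).deriv
    have heq2 : deriv (fun s => F (ψ s)) =ᶠ[𝓝 (0:ℝ)] fun t => F₁ (ψ t) * (t / ψ t) := by
      filter_upwards [hUopen.eventually_mem hU0] with t ht using key t ht
    rw [heq2.deriv_eq]
    have hA : HasDerivAt (fun t => F₁ (ψ t)) (F₂ (ψ 0) * (0 / ψ 0)) 0 :=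
      (hF₂ (ψ 0) (hψmem 0 hU0)).comp 0 (hψd 0)
    have hB : HasDerivAt (fun t : ℝ => t / ψ t)
        ((1 * ψ 0 - 0 * (0 / ψ 0)) / ψ 0 ^ 2) 0 :=
      (hasDerivAt_id 0).div (hψd 0) (hψpos 0).ne'
    have := (hA.mul hB).deriv
    rw [show (fun t => F₁ (ψ t) * (t / ψ t)) = ((fun t => F₁ (ψ t)) * fun t : ℝ => t / ψ t) from rfl, this]
    rw [hψ0]
    have hrne : r ≠ 0 := hr.1.ne'
    field_simp
    ring
  rw [laplacianC, e1, e2]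
end


lemma tail_integral_tendsto_zero {g : ℝ → ℝ} {r₁ : ℝ} (hr₁ : 0 < r₁)
    (hg : IntegrableOn g (Ioc 0 r₁)) :
    Tendsto (fun r => ∫ t in Ioc 0 r, g t) (𝓝[>] (0:ℝ)) (𝓝 0) := by
  set μ := volume.restrict (Ioc (0:ℝ) r₁) with hμ
  have hμs : Tendsto (fun r => μ (Ioc 0 r)) (𝓝[>] (0:ℝ)) (𝓝 0) := by
    have hub : Tendsto (fun r : ℝ => ENNReal.ofReal r) (𝓝[>] (0:ℝ)) (𝓝 0) := by
      have := (ENNReal.continuous_ofReal.tendsto 0).comp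
        (tendsto_id.mono_left (nhdsWithin_le_nhds : 𝓝[>] (0:ℝ) ≤ 𝓝 0))
      simpa using this
    refine tendsto_of_tendsto_of_tendsto_of_le_of_le tendsto_const_nhds hub
      (fun r => zero_le) (fun r => ?_)
    calc μ (Ioc 0 r) ≤ volume (Ioc (0:ℝ) r) := Measure.restrict_apply_le _ _
      _ = ENNReal.ofReal r := by simp [Real.volume_Ioc]
  have h0 := hg.tendsto_setIntegral_nhds_zero (s := fun r : ℝ => Ioc 0 r) hμs
  refine h0.congr' ?_
  filter_upwards [Ioo_mem_nhdsGT_of_mem ⟨le_refl (0:ℝ), hr₁⟩] with r hr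
  rw [Measure.restrict_restrict measurableSet_Ioc,
    Set.Ioc_inter_Ioc]
  congr 1
  simp [max_self, min_eq_left hr.2.le]


lemma fubini_bound {u : ℝ → ℝ} {r₁ : ℝ} (hr₁ : 0 < r₁) (hr₁1 : r₁ ≤ 1)
    (hu_meas : Measurable u)
    (hsu_int : IntegrableOn (fun t => t * u t) (Ioc 0 r₁))
    (hsu_nonneg : ∀ t ∈ Ioc (0:ℝ) r₁, 0 ≤ u t)
    (hlog_int : IntegrableOn (fun t => t * |Real.log t| * u t) (Ioc 0 r₁)) :
    ∫⁻ s in Ioc (0:ℝ) r₁, ENNReal.ofReal (s⁻¹ * ∫ t in Ioc 0 s, t * u t) < ⊤ := by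
  set g : ℝ → ℝ≥0∞ := fun t => ENNReal.ofReal (t * u t) with hgdef
  have hgmeas : Measurable g := (measurable_id.mul hu_meas).ennreal_ofReal
  -- rewrite integrand using a kernel
  set k : ℝ → ℝ → ℝ≥0∞ := fun s t => ENNReal.ofReal s⁻¹ * Set.indicator (Ioc 0 s) g t
    with hkdef
  have step1 : ∀ s ∈ Ioc (0:ℝ) r₁,
      ENNReal.ofReal (s⁻¹ * ∫ t in Ioc 0 s, t * u t) = ∫⁻ t in Ioc 0 r₁, k s t := by
    intro s hs
    have hint : IntegrableOn (fun t => t * u t) (Ioc 0 s) :=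
      hsu_int.mono_set (Ioc_subset_Ioc le_rfl hs.2)
    have hnn : 0 ≤ᵐ[volume.restrict (Ioc (0:ℝ) s)] fun t => t * u t :=
      (ae_restrict_mem measurableSet_Ioc).mono fun t ht =>
        mul_nonneg ht.1.le (hsu_nonneg t ⟨ht.1, ht.2.trans hs.2⟩)
    have h1 : ENNReal.ofReal (∫ t in Ioc 0 s, t * u t) = ∫⁻ t in Ioc 0 s, g t :=
      ofReal_integral_eq_lintegral_ofReal hint hnn
    rw [ENNReal.ofReal_mul (inv_nonneg.2 hs.1.le), h1]
    rw [lintegral_const_mul' _ _ ENNReal.ofReal_ne_top]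
    congr 1
    rw [← lintegral_indicator measurableSet_Ioc,
        ← lintegral_indicator (μ := volume) measurableSet_Ioc]
    congr 1
    funext t
    by_cases h : t ∈ Ioc (0:ℝ) s
    · rw [Set.indicator_of_mem h, Set.indicator_of_mem (mem_Ioc.2 ⟨h.1, h.2.trans hs.2⟩),
        Set.indicator_of_mem h]
    · rw [Set.indicator_of_notMem h]
      by_cases h2 : t ∈ Ioc (0:ℝ) r₁
      · rw [Set.indicator_of_mem h2, Set.indicator_of_notMem h]
      · rw [Set.indicator_of_notMem h2]
  have step1' : ∫⁻ s in Ioc (0:ℝ) r₁, ENNReal.ofReal (s⁻¹ * ∫ t in Ioc 0 s, t * u t)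
      = ∫⁻ s in Ioc (0:ℝ) r₁, ∫⁻ t in Ioc 0 r₁, k s t := by
    exact setLIntegral_congr_fun measurableSet_Ioc step1
  rw [step1']
  -- swap
  have hker : AEMeasurable (Function.uncurry k)
      ((volume.restrict (Ioc (0:ℝ) r₁)).prod (volume.restrict (Ioc (0:ℝ) r₁))) := by
    apply Measurable.aemeasurable
    have : Function.uncurry k = fun p : ℝ × ℝ =>
        ENNReal.ofReal p.1⁻¹ *
          Set.indicator {q : ℝ × ℝ | 0 < q.2 ∧ q.2 ≤ q.1} (fun q => g q.2) p := by
      funext p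
      simp only [Function.uncurry, hkdef, Set.indicator_apply, mem_Ioc, mem_setOf_eq]
    rw [this]
    refine (measurable_fst.inv.ennreal_ofReal).mul (Measurable.indicator ?_ ?_)
    · exact hgmeas.comp measurable_snd
    · exact (measurableSet_lt measurable_const measurable_snd).inter
        (measurableSet_le measurable_snd measurable_fst)
  rw [lintegral_lintegral_swap hker]
  -- inner integral computation / bound
  have inner_bound : ∀ t ∈ Ioc (0:ℝ) r₁,
      (∫⁻ s in Ioc (0:ℝ) r₁, k s t) ≤ ENNReal.ofReal (t * |Real.log t| * u t) := by
    intro t ht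
    have htpos := ht.1
    have hlog_t : Real.log t ≤ 0 := Real.log_nonpos htpos.le (ht.2.trans hr₁1)
    have hlog_r₁ : Real.log r₁ ≤ 0 := Real.log_nonpos hr₁.le hr₁1
    -- the inner integrand is supported on s ≥ t
    have hk_eq : ∀ s : ℝ, k s t = Set.indicator (Ici t) (fun s => ENNReal.ofReal s⁻¹ * g t) s := by
      intro s
      simp only [hkdef, Set.indicator_apply, mem_Ioc, mem_Ici]
      by_cases h : t ≤ s
      · simp [h, htpos]
      · simp [h]
    calc (∫⁻ s in Ioc (0:ℝ) r₁, k s t)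
        = ∫⁻ s in Ioc (0:ℝ) r₁, (Ici t).indicator (fun s => ENNReal.ofReal s⁻¹ * g t) s :=
          lintegral_congr fun s => hk_eq s
      _ = ∫⁻ s in Ici t ∩ Ioc (0:ℝ) r₁, ENNReal.ofReal s⁻¹ * g t := by
          rw [lintegral_indicator measurableSet_Ici,
            Measure.restrict_restrict measurableSet_Ici]
      _ = (∫⁻ s in Icc t r₁, ENNReal.ofReal s⁻¹) * g t := by
          rw [show Ici t ∩ Ioc (0:ℝ) r₁ = Icc t r₁ by
            ext x; simp only [mem_inter_iff, mem_Ioc, mem_Ici, mem_Icc]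
            constructor
            · rintro ⟨h3, ⟨_, h2⟩⟩; exact ⟨h3, h2⟩
            · rintro ⟨h1, h2⟩; exact ⟨h1, ⟨lt_of_lt_of_le htpos h1, h2⟩⟩]
          rw [lintegral_mul_const' _ _ ENNReal.ofReal_ne_top]
      _ = ENNReal.ofReal (Real.log r₁ - Real.log t) * g t := by
          congr 1
          have hcont : ContinuousOn (fun s : ℝ => s⁻¹) (Icc t r₁) :=
            ContinuousOn.inv₀ continuousOn_id
              (fun x hx => (lt_of_lt_of_le htpos hx.1).ne')
          have hint : IntegrableOn (fun s : ℝ => s⁻¹) (Icc t r₁) :=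
            hcont.integrableOn_compact isCompact_Icc
          have hnn : 0 ≤ᵐ[volume.restrict (Icc t r₁)] fun s : ℝ => s⁻¹ :=
            (ae_restrict_mem measurableSet_Icc).mono fun s hsm =>
              inv_nonneg.2 (lt_of_lt_of_le htpos hsm.1).le
          rw [← ofReal_integral_eq_lintegral_ofReal hint hnn]
          congr 1
          rw [integral_Icc_eq_integral_Ioc, ← integral_of_le ht.2,
            integral_inv_of_pos htpos hr₁,
            Real.log_div hr₁.ne' htpos.ne']
      _ ≤ ENNReal.ofReal (|Real.log t|) * g t := by
          apply mul_le_mul_left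
          apply ENNReal.ofReal_le_ofReal
          rw [abs_of_nonpos hlog_t]
          linarith
      _ = ENNReal.ofReal (t * |Real.log t| * u t) := by
          rw [hgdef, ← ENNReal.ofReal_mul (abs_nonneg _)]
          ring_nf
  calc (∫⁻ t in Ioc (0:ℝ) r₁, ∫⁻ s in Ioc (0:ℝ) r₁, k s t)
      ≤ ∫⁻ t in Ioc (0:ℝ) r₁, ENNReal.ofReal (t * |Real.log t| * u t) := by
        exact lintegral_mono_ae ((ae_restrict_mem measurableSet_Ioc).mono
          fun t ht => inner_bound t ht)
    _ ≤ ∫⁻ t in Ioc (0:ℝ) r₁, ‖t * |Real.log t| * u t‖ₑ :=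
        lintegral_mono fun t => Real.ofReal_le_enorm _
    _ < ⊤ := hlog_int.2


theorem stmt13 (r₀ : ℝ) (hr₀ : 0 < r₀) (u : ℝ → ℝ)
    (hu_meas : Measurable u) (hu_nonneg : ∀ r ∈ Ioc (0:ℝ) r₀, 0 ≤ u r)
    (hu_int : IntegrableOn (fun r => r * |Real.log r| * u r) (Ioc 0 r₀))
    (f : ℂ → ℝ) (F : ℝ → ℝ)
    (hf_radial : ∀ a : ℂ, f a = F (‖a‖))
    (hf_C2 : ContDiffOn ℝ 2 f {a : ℂ | 0 < ‖a‖ ∧ ‖a‖ < r₀})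
    (hf_bdd : ∃ M : ℝ, ∀ a ∈ {a : ℂ | 0 < ‖a‖ ∧ ‖a‖ < r₀}, |f a| ≤ M)
    (hf_lap : ∀ a ∈ {a : ℂ | 0 < ‖a‖ ∧ ‖a‖ < r₀},
      |laplacianC f a| ≤ u (‖a‖)) :
    ∃ L : ℝ, Tendsto F (𝓝[>] (0:ℝ)) (𝓝 L) := by
  obtain ⟨M, hM⟩ := hf_bdd
  have hFC2 : ContDiffOn ℝ 2 F (Ioo 0 r₀) := F_contDiffOn hf_radial hf_C2
  set F₁ := deriv F with hF₁def
  set F₂ := deriv (deriv F) with hF₂def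
  have hF₁ : ∀ s ∈ Ioo (0:ℝ) r₀, HasDerivAt F (F₁ s) s := fun s hs =>
    ((hFC2.differentiableOn two_ne_zero).differentiableAt
      (isOpen_Ioo.mem_nhds hs)).hasDerivAt
  have hFC1' : ContDiffOn ℝ 1 F₁ (Ioo 0 r₀) :=
    hFC2.deriv_of_isOpen isOpen_Ioo (by norm_num)
  have hF₂ : ∀ s ∈ Ioo (0:ℝ) r₀, HasDerivAt F₁ (F₂ s) s := fun s hs =>
    ((hFC1'.differentiableOn one_ne_zero).differentiableAt
      (isOpen_Ioo.mem_nhds hs)).hasDerivAt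
  have hF₁cont : ContinuousOn F₁ (Ioo 0 r₀) := hFC1'.continuousOn
  have hF₂cont : ContinuousOn F₂ (Ioo 0 r₀) :=
    hFC1'.continuousOn_deriv_of_isOpen isOpen_Ioo le_rfl
  have hmemS : ∀ s ∈ Ioo (0:ℝ) r₀,
      (s:ℂ) ∈ {a : ℂ | 0 < ‖a‖ ∧ ‖a‖ < r₀} := by
    intro s hs
    simp only [mem_setOf_eq, Complex.norm_real, Real.norm_eq_abs, abs_of_pos hs.1]
    exact ⟨hs.1, hs.2⟩
  have hFbd : ∀ s ∈ Ioo (0:ℝ) r₀, |F s| ≤ M := by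
    intro s hs
    have h := hM (s:ℂ) (hmemS s hs)
    rwa [hf_radial, Complex.norm_real, Real.norm_eq_abs, abs_of_pos hs.1] at h
  have hMnn : 0 ≤ M :=
    le_trans (abs_nonneg _) (hFbd (r₀/2) ⟨by linarith, by linarith⟩)
  -- the key differential inequality
  have key : ∀ s ∈ Ioo (0:ℝ) r₀, |s * F₂ s + F₁ s| ≤ s * u s := by
    intro s hs
    have h := hf_lap (s:ℂ) (hmemS s hs)
    rw [Complex.norm_real, Real.norm_eq_abs, abs_of_pos hs.1,
      lap_radial hr₀ hf_radial hf_C2 hF₁ hF₂ hs] at h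
    have hsne : s ≠ 0 := hs.1.ne'
    have he : s * F₂ s + F₁ s = s * (F₂ s + F₁ s / s) := by
      field_simp
    rw [he, abs_mul, abs_of_pos hs.1]
    exact mul_le_mul_of_nonneg_left h hs.1.le
  -- working radius
  set r₁ : ℝ := min r₀ 1 / 2 with hr₁def
  have hr₁pos : 0 < r₁ := by
    have : 0 < min r₀ 1 := lt_min hr₀ one_pos
    positivity
  have hr₁lt : r₁ < r₀ := by
    have h1 : min r₀ 1 ≤ r₀ := min_le_left _ _
    have : 0 < min r₀ 1 := lt_min hr₀ one_pos
    linarith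
  have hr₁half : r₁ ≤ 1/2 := by
    have : min r₀ 1 ≤ 1 := min_le_right _ _
    linarith
  have hr₁mem : r₁ ∈ Ioo (0:ℝ) r₀ := ⟨hr₁pos, hr₁lt⟩
  have hIocIoo : Ioc (0:ℝ) r₁ ⊆ Ioo (0:ℝ) r₀ := fun t ht =>
    ⟨ht.1, lt_of_le_of_lt ht.2 hr₁lt⟩
  -- integrability of t * u t near 0
  have hlog_int : IntegrableOn (fun t => t * |Real.log t| * u t) (Ioc 0 r₁) :=
    hu_int.mono_set (Ioc_subset_Ioc le_rfl hr₁lt.le)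
  have hsu_int : IntegrableOn (fun t => t * u t) (Ioc 0 r₁) := by
    have hlog2 : (0:ℝ) < Real.log 2 := Real.log_pos (by norm_num)
    apply Integrable.mono' (hlog_int.const_mul ((Real.log 2)⁻¹))
    · exact ((measurable_id.mul hu_meas)).aestronglyMeasurable
    · refine (ae_restrict_mem measurableSet_Ioc).mono fun t ht => ?_
      have htpos := ht.1
      have ht1 : t ≤ 1/2 := le_trans ht.2 hr₁half
      have hunn : 0 ≤ u t := hu_nonneg t ⟨htpos, le_trans ht.2 hr₁lt.le⟩
      have hlogt : Real.log 2 ≤ |Real.log t| := by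
        rw [abs_of_nonpos (Real.log_nonpos htpos.le (by linarith))]
        have : Real.log t ≤ Real.log (1/2) :=
          Real.log_le_log htpos ht1
        rw [Real.log_div one_ne_zero (by norm_num), Real.log_one] at this
        linarith
      rw [Real.norm_eq_abs, abs_of_nonneg (mul_nonneg htpos.le hunn)]
      have h2 : Real.log 2 * (t * u t) ≤ t * |Real.log t| * u t := by
        nlinarith [mul_nonneg htpos.le hunn]
      calc t * u t = (Real.log 2)⁻¹ * (Real.log 2 * (t * u t)) := by
            field_simp
        _ ≤ (Real.log 2)⁻¹ * (t * |Real.log t| * u t) := by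
            apply mul_le_mul_of_nonneg_left h2 (by positivity)
  -- H and its derivative
  set H : ℝ → ℝ := fun s => s * F₁ s with hHdef
  have hH : ∀ s ∈ Ioo (0:ℝ) r₀, HasDerivAt H (s * F₂ s + F₁ s) s := by
    intro s hs
    have h0 := (hasDerivAt_id s).mul (hF₂ s hs)
    have he : (1 : ℝ) * F₁ s + id s * F₂ s = s * F₂ s + F₁ s := by
      simp only [id_eq]; ring
    rw [he] at h0
    exact h0
  set G' : ℝ → ℝ := fun s => s * F₂ s + F₁ s with hG'def
  have hG'cont : ContinuousOn G' (Ioo 0 r₀) :=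
    (continuousOn_id.mul hF₂cont).add hF₁cont
  have hHcont : ContinuousOn H (Ioo 0 r₀) := continuousOn_id.mul hF₁cont
  have hG'meas : Measurable G' :=
    (measurable_id.mul (measurable_deriv _)).add (measurable_deriv _)
  have hG'int : IntegrableOn G' (Ioc 0 r₁) := by
    apply Integrable.mono' hsu_int hG'meas.aestronglyMeasurable
    refine (ae_restrict_mem measurableSet_Ioc).mono fun t ht => ?_
    rw [Real.norm_eq_abs]
    exact key t (hIocIoo ht)
  -- FTC for H
  have ftcH : ∀ a b : ℝ, 0 < a → a ≤ b → b < r₀ →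
      H b - H a = ∫ s in Ioc a b, G' s := by
    intro a b ha hab hbr
    rw [← integral_of_le hab]
    refine (integral_eq_sub_of_hasDerivAt (fun s hs => ?_) ?_).symm
    · rw [uIcc_of_le hab] at hs
      exact hH s ⟨lt_of_lt_of_le ha hs.1, lt_of_le_of_lt hs.2 hbr⟩
    · apply ContinuousOn.intervalIntegrable
      apply hG'cont.mono
      rw [uIcc_of_le hab]
      intro s hs
      exact ⟨lt_of_lt_of_le ha hs.1, lt_of_le_of_lt hs.2 hbr⟩
  -- the function η
  set η : ℝ → ℝ := fun r => ∫ t in Ioc 0 r, t * u t with hηdef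
  have hη0 : Tendsto η (𝓝[>] (0:ℝ)) (𝓝 0) :=
    tail_integral_tendsto_zero hr₁pos hsu_int
  have hsu_nonneg_ae : ∀ b, b ≤ r₁ →
      0 ≤ᵐ[volume.restrict (Ioc (0:ℝ) b)] fun t => t * u t := by
    intro b hb
    refine (ae_restrict_mem measurableSet_Ioc).mono fun t ht => ?_
    exact mul_nonneg ht.1.le (hu_nonneg t ⟨ht.1, le_trans (le_trans ht.2 hb) hr₁lt.le⟩)
  have hηmono : ∀ a b : ℝ, a ≤ b → b ≤ r₁ → η a ≤ η b := by
    intro a b hab hb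
    apply setIntegral_mono_set (hsu_int.mono_set (Ioc_subset_Ioc le_rfl hb))
      (hsu_nonneg_ae b hb)
    exact HasSubset.Subset.eventuallyLE (Ioc_subset_Ioc le_rfl hab)
  -- the limit of H
  set c : ℝ := H r₁ - ∫ s in Ioc 0 r₁, G' s with hcdef
  have hHc : ∀ r : ℝ, 0 < r → r ≤ r₁ → H r - c = ∫ s in Ioc 0 r, G' s := by
    intro r hr hrr₁
    have hsplit : ∫ s in Ioc 0 r₁, G' s
        = (∫ s in Ioc 0 r, G' s) + ∫ s in Ioc r r₁, G' s := by
      rw [← Ioc_union_Ioc_eq_Ioc hr.le hrr₁]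
      exact setIntegral_union (Ioc_disjoint_Ioc_of_le le_rfl) measurableSet_Ioc
        (hG'int.mono_set (Ioc_subset_Ioc le_rfl hrr₁))
        (hG'int.mono_set (Ioc_subset_Ioc hr.le le_rfl))
    have hftc := ftcH r r₁ hr hrr₁ hr₁lt
    rw [hcdef, hsplit]
    linarith
  have hHbd : ∀ r : ℝ, 0 < r → r ≤ r₁ → |H r - c| ≤ η r := by
    intro r hr hrr₁
    rw [hHc r hr hrr₁]
    calc |∫ s in Ioc 0 r, G' s| ≤ ∫ s in Ioc 0 r, |G' s| := by
          simpa [Real.norm_eq_abs] using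
            MeasureTheory.norm_integral_le_integral_norm (f := G')
              (μ := volume.restrict (Ioc 0 r))
      _ ≤ η r := by
          apply setIntegral_mono_on
            ((hG'int.mono_set (Ioc_subset_Ioc le_rfl hrr₁)).abs)
            (hsu_int.mono_set (Ioc_subset_Ioc le_rfl hrr₁)) measurableSet_Ioc
          intro t ht
          exact key t (hIocIoo ⟨ht.1, le_trans ht.2 hrr₁⟩)
  have hHtend : Tendsto H (𝓝[>] (0:ℝ)) (𝓝 c) := by
    have h1 : Tendsto (fun r => H r - c) (𝓝[>] (0:ℝ)) (𝓝 0) := by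
      apply squeeze_zero_norm' _ hη0
      filter_upwards [Ioo_mem_nhdsGT_of_mem ⟨le_refl (0:ℝ), hr₁pos⟩] with r hr
      simpa [Real.norm_eq_abs] using hHbd r hr.1 hr.2.le
    simpa using h1.add_const c
  -- c must vanish
  have hc0 : c = 0 := by
    by_contra hc
    have hcpos : 0 < |c| := abs_pos.2 hc
    obtain ⟨δ, hδ1, hδ2⟩ : ∃ δ, η δ < |c|/2 ∧ δ ∈ Ioo 0 r₁ := by
      have h1 := hη0.eventually (gt_mem_nhds (show (0:ℝ) < |c|/2 by positivity))
      exact (h1.and (Ioo_mem_nhdsGT_of_mem ⟨le_refl (0:ℝ), hr₁pos⟩)).exists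
    have hHsmall : ∀ s, 0 < s → s ≤ δ → |H s - c| ≤ |c|/2 := fun s hs hsδ =>
      le_trans (hHbd s hs (le_trans hsδ hδ2.2.le))
        (le_trans (hηmono s δ hsδ hδ2.2.le) hδ1.le)
    set x : ℝ := (4*M+4)/|c| with hxdef
    have hxpos : 0 < x := by positivity
    set r : ℝ := δ * Real.exp (-x) with hrdef
    have hrpos : 0 < r := mul_pos hδ2.1 (Real.exp_pos _)
    have hrδ : r < δ := by
      have h1 : Real.exp (-x) < 1 := Real.exp_lt_one_iff.2 (by linarith)
      calc r = δ * Real.exp (-x) := rfl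
        _ < δ * 1 := mul_lt_mul_of_pos_left h1 hδ2.1
        _ = δ := mul_one δ
    have hlogratio : Real.log (δ / r) = x := by
      have hδexp : δ / r = Real.exp x := by
        rw [hrdef, Real.exp_neg]
        field_simp
        exact div_self (ne_of_gt hδ2.1)
      rw [hδexp, Real.log_exp]
    have hsub : uIcc r δ ⊆ Ioo 0 r₀ := by
      rw [uIcc_of_le hrδ.le]
      intro s hs
      exact ⟨lt_of_lt_of_le hrpos hs.1, lt_of_le_of_lt hs.2 (lt_trans hδ2.2 hr₁lt)⟩
    have ftcF : F δ - F r = ∫ s in r..δ, F₁ s :=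
      (integral_eq_sub_of_hasDerivAt (fun s hs => hF₁ s (hsub hs))
        ((hF₁cont.mono hsub).intervalIntegrable)).symm
    have hsplitint : ∀ s ∈ uIcc r δ, F₁ s = (H s - c)/s + c * s⁻¹ := by
      intro s hs
      have hspos : 0 < s := (hsub hs).1
      show F₁ s = (s * F₁ s - c)/s + c * s⁻¹
      field_simp
      ring
    have hcont1 : ContinuousOn (fun s => (H s - c)/s) (uIcc r δ) :=
      ((hHcont.mono hsub).sub continuousOn_const).div continuousOn_id
        (fun s hs => (hsub hs).1.ne')
    have hinv : ContinuousOn (fun s : ℝ => s⁻¹) (uIcc r δ) :=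
      ContinuousOn.inv₀ continuousOn_id (fun s hs => (hsub hs).1.ne')
    have hcont2 : ContinuousOn (fun s : ℝ => c * s⁻¹) (uIcc r δ) :=
      continuousOn_const.mul hinv
    have hdecomp : ∫ s in r..δ, F₁ s
        = (∫ s in r..δ, (H s - c)/s) + ∫ s in r..δ, c * s⁻¹ := by
      rw [← integral_add (hcont1.intervalIntegrable) (hcont2.intervalIntegrable)]
      exact integral_congr hsplitint
    have hlog_eval : ∫ s in r..δ, c * s⁻¹ = c * x := by
      rw [intervalIntegral.integral_const_mul, integral_inv_of_pos hrpos hδ2.1, hlogratio]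
    have habs : |∫ s in r..δ, (H s - c)/s| ≤ |c|/2 * x := by
      have hbint : IntervalIntegrable (fun s : ℝ => |c|/2 * s⁻¹) volume r δ :=
        (continuousOn_const.mul hinv).intervalIntegrable
      calc |∫ s in r..δ, (H s - c)/s| ≤ ∫ s in r..δ, |(H s - c)/s| :=
            abs_integral_le_integral_abs hrδ.le
        _ ≤ ∫ s in r..δ, (|c|/2) * s⁻¹ := by
            apply integral_mono_on hrδ.le (hcont1.abs.intervalIntegrable) hbint
            intro s hs
            have hspos : 0 < s := lt_of_lt_of_le hrpos hs.1
            rw [abs_div, abs_of_pos hspos, div_eq_mul_inv]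
            exact mul_le_mul_of_nonneg_right (hHsmall s hspos hs.2)
              (inv_nonneg.2 hspos.le)
        _ = |c|/2 * x := by
            rw [intervalIntegral.integral_const_mul, integral_inv_of_pos hrpos hδ2.1, hlogratio]
    have hlower : |c| * x - |c|/2 * x ≤ |F δ - F r| := by
      have hX := abs_add_le ((∫ s in r..δ, (H s - c)/s) + c * x)
        (-(∫ s in r..δ, (H s - c)/s))
      have hsum : F δ - F r = (∫ s in r..δ, (H s - c)/s) + c * x := by
        rw [ftcF, hdecomp, hlog_eval]
      have hcx : |c * x| = |c| * x := by rw [abs_mul, abs_of_pos hxpos]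
      have habs2 : |-(∫ s in r..δ, (H s - c)/s)| ≤ |c|/2 * x := by
        rwa [abs_neg]
      have : |c| * x ≤ |F δ - F r| + |c|/2 * x := by
        rw [hsum]
        calc |c| * x = |c * x| := hcx.symm
          _ = |((∫ s in r..δ, (H s - c)/s) + c * x) +
              -(∫ s in r..δ, (H s - c)/s)| := by congr 1; ring
          _ ≤ |(∫ s in r..δ, (H s - c)/s) + c * x| +
              |-(∫ s in r..δ, (H s - c)/s)| := hX
          _ ≤ |(∫ s in r..δ, (H s - c)/s) + c * x| + |c|/2 * x := by linarith
      linarith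
    have hupper : |F δ - F r| ≤ 2*M := by
      have h1 := hFbd δ ⟨hδ2.1, lt_trans hδ2.2 hr₁lt⟩
      have h2 := hFbd r ⟨hrpos, lt_trans (lt_trans hrδ hδ2.2) hr₁lt⟩
      calc |F δ - F r| = |F δ + -(F r)| := by rw [sub_eq_add_neg]
        _ ≤ |F δ| + |-(F r)| := abs_add_le _ _
        _ = |F δ| + |F r| := by rw [abs_neg]
        _ ≤ 2*M := by linarith
    have hfinal : |c|/2 * x ≤ 2*M := by linarith
    have hxval : |c|/2 * x = 2*M + 2 := by
      rw [hxdef]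
      field_simp
      ring
    linarith
  -- integrability of F₁ near 0
  have hHabs : ∀ s, 0 < s → s ≤ r₁ → |H s| ≤ η s := by
    intro s hs hsr
    have := hHbd s hs hsr
    rwa [hc0, sub_zero] at this
  have hF₁int : IntegrableOn F₁ (Ioc 0 r₁) := by
    refine ⟨(measurable_deriv F).aestronglyMeasurable, ?_⟩
    rw [hasFiniteIntegral_iff_norm]
    refine lt_of_le_of_lt (lintegral_mono_ae ?_)
      (fubini_bound hr₁pos (le_trans hr₁half (by norm_num)) hu_meas hsu_int
        (fun t ht => hu_nonneg t ⟨ht.1, le_trans ht.2 hr₁lt.le⟩) hlog_int)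
    refine (ae_restrict_mem measurableSet_Ioc).mono fun s hs => ?_
    apply ENNReal.ofReal_le_ofReal
    have hspos := hs.1
    have h1 : ‖F₁ s‖ = s⁻¹ * |H s| := by
      rw [Real.norm_eq_abs]
      have : |H s| = s * |F₁ s| := by
        show |s * F₁ s| = s * |F₁ s|
        rw [abs_mul, abs_of_pos hspos]
      rw [this]
      field_simp
    rw [h1]
    exact mul_le_mul_of_nonneg_left (hHabs s hspos hs.2) (inv_nonneg.2 hspos.le)
  -- final limit
  set L : ℝ := F r₁ - ∫ s in Ioc 0 r₁, F₁ s with hLdef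
  have ftcF2 : ∀ r, 0 < r → r ≤ r₁ → F r₁ - F r = ∫ s in Ioc r r₁, F₁ s := by
    intro r hr hrr₁
    have hsub : uIcc r r₁ ⊆ Ioo 0 r₀ := by
      rw [uIcc_of_le hrr₁]
      intro s hs
      exact ⟨lt_of_lt_of_le hr hs.1, lt_of_le_of_lt hs.2 hr₁lt⟩
    rw [← integral_of_le hrr₁]
    exact (integral_eq_sub_of_hasDerivAt (fun s hs => hF₁ s (hsub hs))
      ((hF₁cont.mono hsub).intervalIntegrable)).symm
  have hFL : ∀ r, 0 < r → r ≤ r₁ → F r - L = ∫ s in Ioc 0 r, F₁ s := by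
    intro r hr hrr₁
    have hsplit : ∫ s in Ioc 0 r₁, F₁ s
        = (∫ s in Ioc 0 r, F₁ s) + ∫ s in Ioc r r₁, F₁ s := by
      rw [← Ioc_union_Ioc_eq_Ioc hr.le hrr₁]
      exact setIntegral_union (Ioc_disjoint_Ioc_of_le le_rfl) measurableSet_Ioc
        (hF₁int.mono_set (Ioc_subset_Ioc le_rfl hrr₁))
        (hF₁int.mono_set (Ioc_subset_Ioc hr.le le_rfl))
    have h2 := ftcF2 r hr hrr₁
    rw [hLdef, hsplit]
    linarith
  refine ⟨L, ?_⟩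
  have hρ : Tendsto (fun r => ∫ s in Ioc 0 r, F₁ s) (𝓝[>] (0:ℝ)) (𝓝 0) :=
    tail_integral_tendsto_zero hr₁pos hF₁int
  have h1 : Tendsto (fun r => F r - L) (𝓝[>] (0:ℝ)) (𝓝 0) := by
    apply hρ.congr'
    filter_upwards [Ioo_mem_nhdsGT_of_mem ⟨le_refl (0:ℝ), hr₁pos⟩] with r hr
    exact (hFL r hr.1 hr.2.le).symm
  simpa using h1.add_const L
end
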